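/- arXiv:1304.0062 — 10 statements merged into one kernel-verified Lean document; each statement's English description precedes it below -/
import Mathlib

section
/- The JBPS problem is feasible if and only if the problem obtained by deleting all harvested-power constraints is feasible. That is, there exist beamformers v_1,…,v_K ∈ ℂ^{N_t} and ratios ρ_1,…,ρ_K ∈ (0,1) with SINR_k(v,ρ) ≥ γ_k and E_k(v,ρ) ≥ e_k for all k, if and only if there exist v_1,…,v_K ∈ ℂ^{N_t} and ρ_1,…,ρ_K ∈ (0,1) with SINR_k(v,ρ) ≥ γ_k for all k. -/
noncomputable section

open Finset

/-- SINR of user `k` with beamformers `v` and power-splitting ratios `ρ`. -/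
def SINR {K Nt : ℕ} (h : Fin K → EuclideanSpace ℂ (Fin Nt)) (σ2 δ2 : Fin K → ℝ)
    (v : Fin K → EuclideanSpace ℂ (Fin Nt)) (ρ : Fin K → ℝ) (k : Fin K) : ℝ :=
  ρ k * ‖(inner ℂ (h k) (v k) : ℂ)‖ ^ 2 /
    (ρ k * ∑ j ∈ univ.erase k, ‖(inner ℂ (h k) (v j) : ℂ)‖ ^ 2 + ρ k * σ2 k + δ2 k)

/-- Harvested power of user `k`. -/
def EH {K Nt : ℕ} (h : Fin K → EuclideanSpace ℂ (Fin Nt)) (σ2 ζ : Fin K → ℝ)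
    (v : Fin K → EuclideanSpace ℂ (Fin Nt)) (ρ : Fin K → ℝ) (k : Fin K) : ℝ :=
  ζ k * (1 - ρ k) * ((∑ j, ‖(inner ℂ (h k) (v j) : ℂ)‖ ^ 2) + σ2 k)

theorem jbps_feasible_iff_sinr_feasible (K Nt : ℕ) (hK : 1 ≤ K) (hNt : 1 ≤ Nt)
    (h : Fin K → EuclideanSpace ℂ (Fin Nt)) (σ2 δ2 ζ γ e : Fin K → ℝ)
    (hσ : ∀ k, 0 < σ2 k) (hδ : ∀ k, 0 < δ2 k)
    (hζ : ∀ k, 0 < ζ k ∧ ζ k ≤ 1) (hγ : ∀ k, 0 < γ k) (he : ∀ k, 0 < e k) :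
    (∃ (v : Fin K → EuclideanSpace ℂ (Fin Nt)) (ρ : Fin K → ℝ),
      (∀ k, 0 < ρ k ∧ ρ k < 1) ∧
      (∀ k, γ k ≤ SINR h σ2 δ2 v ρ k) ∧
      (∀ k, e k ≤ EH h σ2 ζ v ρ k)) ↔
    (∃ (v : Fin K → EuclideanSpace ℂ (Fin Nt)) (ρ : Fin K → ℝ),
      (∀ k, 0 < ρ k ∧ ρ k < 1) ∧
      (∀ k, γ k ≤ SINR h σ2 δ2 v ρ k)) := by
  constructor
  · rintro ⟨v, ρ, h1, h2, _⟩; exact ⟨v, ρ, h1, h2⟩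
  · rintro ⟨v, ρ, hρ, hsinr⟩
    set A : Fin K → Fin K → ℝ := fun k j => ‖(inner ℂ (h k) (v j) : ℂ)‖ ^ 2 with hA
    have hAnn : ∀ k j, 0 ≤ A k j := fun k j => sq_nonneg _
    have hden : ∀ k, 0 < ρ k * ∑ j ∈ univ.erase k, A k j + ρ k * σ2 k + δ2 k := by
      intro k
      have h1 : 0 ≤ ρ k * ∑ j ∈ univ.erase k, A k j :=
        mul_nonneg (hρ k).1.le (Finset.sum_nonneg fun j _ => hAnn k j)
      have h2 : 0 < ρ k * σ2 k := mul_pos (hρ k).1 (hσ k)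
      linarith [hδ k]
    have hApos : ∀ k, 0 < A k k := by
      intro k
      by_contra hc
      push_neg at hc
      have hA0 : A k k = 0 := le_antisymm hc (hAnn k k)
      have hs := hsinr k
      unfold SINR at hs
      rw [show ‖(inner ℂ (h k) (v k) : ℂ)‖ ^ 2 = A k k from rfl, hA0, mul_zero,
        zero_div] at hs
      exact absurd hs (not_le.mpr (hγ k))
    have hfac : ∀ k, 0 < ζ k * (1 - ρ k) * A k k := fun k =>
      mul_pos (mul_pos (hζ k).1 (by linarith [(hρ k).2])) (hApos k)
    set c : ℝ := 1 + ∑ k, e k / (ζ k * (1 - ρ k) * A k k) with hc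
    have hsum_nn : 0 ≤ ∑ k, e k / (ζ k * (1 - ρ k) * A k k) :=
      Finset.sum_nonneg fun k _ => div_nonneg (he k).le (hfac k).le
    have hc1 : 1 ≤ c := by simp only [hc]; linarith
    have hc0 : 0 < c := by linarith
    have hck : ∀ k, e k / (ζ k * (1 - ρ k) * A k k) ≤ c := by
      intro k
      have := Finset.single_le_sum
        (f := fun k => e k / (ζ k * (1 - ρ k) * A k k))
        (fun j _ => div_nonneg (he j).le (hfac j).le) (Finset.mem_univ k)
      simp only [hc]; linarith
    set s : ℝ := Real.sqrt c with hsdef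
    have hs2 : s ^ 2 = c := Real.sq_sqrt hc0.le
    have hnorm : ∀ k j, ‖(inner ℂ (h k) ((s : ℂ) • v j) : ℂ)‖ ^ 2 = c * A k j := by
      intro k j
      rw [inner_smul_right, norm_mul, mul_pow, Complex.norm_real,
        Real.norm_eq_abs, sq_abs, hs2]
    refine ⟨fun j => (s : ℂ) • v j, ρ, hρ, ?_, ?_⟩
    · intro k
      have hs := hsinr k
      unfold SINR at hs ⊢
      rw [hnorm]
      rw [Finset.sum_congr rfl fun j _ => hnorm k j]
      rw [← Finset.mul_sum]
      set a := A k k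
      set b := ∑ j ∈ univ.erase k, A k j with hb
      have hbnn : 0 ≤ b := Finset.sum_nonneg fun j _ => hAnn k j
      have hd1 : 0 < ρ k * b + ρ k * σ2 k + δ2 k := hden k
      have hd2 : 0 < ρ k * (c * b) + ρ k * σ2 k + δ2 k := by
        have h0 : 0 ≤ ρ k * (c * b) := mul_nonneg (hρ k).1.le (mul_nonneg hc0.le hbnn)
        linarith [mul_pos (hρ k).1 (hσ k), hδ k]
      rw [le_div_iff₀ hd2]
      have hge : γ k * (ρ k * b + ρ k * σ2 k + δ2 k) ≤ ρ k * a := by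
        rw [le_div_iff₀ hd1] at hs
        exact hs
      have hmul : c * (γ k * (ρ k * b + ρ k * σ2 k + δ2 k)) ≤ c * (ρ k * a) :=
        mul_le_mul_of_nonneg_left hge hc0.le
      have hextra : 0 ≤ (c - 1) * (γ k * (ρ k * σ2 k + δ2 k)) :=
        mul_nonneg (by linarith) (mul_nonneg (hγ k).le
          (by linarith [mul_pos (hρ k).1 (hσ k), hδ k]))
      nlinarith [hmul, hextra]
    · intro k
      unfold EH
      rw [Finset.sum_congr rfl fun j _ => hnorm k j, ← Finset.mul_sum]
      have hsum : A k k ≤ ∑ j, A k j :=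
        Finset.single_le_sum (fun j _ => hAnn k j) (Finset.mem_univ k)
      have h1 : e k ≤ ζ k * (1 - ρ k) * A k k * c := by
        have := hck k
        rw [div_le_iff₀ (hfac k)] at this
        linarith
      have h2 : ζ k * (1 - ρ k) * A k k * c ≤ ζ k * (1 - ρ k) * (c * ∑ j, A k j + σ2 k) := by
        have hfnn : 0 < ζ k * (1 - ρ k) := mul_pos (hζ k).1 (by linarith [(hρ k).2])
        have h3 : c * A k k ≤ c * ∑ j, A k j := mul_le_mul_of_nonneg_left hsum hc0.le
        have h4 : c * A k k + σ2 k ≤ c * ∑ j, A k j + σ2 k := by linarith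
        calc ζ k * (1 - ρ k) * A k k * c = ζ k * (1 - ρ k) * (c * A k k) := by ring
          _ ≤ ζ k * (1 - ρ k) * (c * A k k + σ2 k) := by nlinarith [hσ k]
          _ ≤ ζ k * (1 - ρ k) * (c * ∑ j, A k j + σ2 k) := mul_le_mul_of_nonneg_left h4 hfnn.le
      linarith
end
end

section
/- There exist v_1,…,v_K ∈ ℂ^{N_t} and ρ_1,…,ρ_K ∈ (0,1) with SINR_k(v,ρ) ≥ γ_k for all k, if and only if there exist v_1,…,v_K ∈ ℂ^{N_t} with |h_k^H v_k|² / (Σ_{j≠k} |h_k^H v_j|² + σ_k² + δ_k²) ≥ γ_k for all k. -/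
noncomputable section

open Finset

theorem sinr_ps_feasible_iff_sinr_feasible (K Nt : ℕ) (hK : 1 ≤ K) (hNt : 1 ≤ Nt)
    (h : Fin K → EuclideanSpace ℂ (Fin Nt)) (σ2 δ2 γ : Fin K → ℝ)
    (hσ : ∀ k, 0 < σ2 k) (hδ : ∀ k, 0 < δ2 k) (hγ : ∀ k, 0 < γ k) :
    (∃ (v : Fin K → EuclideanSpace ℂ (Fin Nt)) (ρ : Fin K → ℝ),
      (∀ k, 0 < ρ k ∧ ρ k < 1) ∧
      (∀ k, γ k ≤ SINR h σ2 δ2 v ρ k)) ↔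
    (∃ v : Fin K → EuclideanSpace ℂ (Fin Nt),
      ∀ k, γ k ≤ ‖(inner ℂ (h k) (v k) : ℂ)‖ ^ 2 /
        ((∑ j ∈ univ.erase k, ‖(inner ℂ (h k) (v j) : ℂ)‖ ^ 2) + σ2 k + δ2 k)) := by
  constructor
  · rintro ⟨v, ρ, hρ, hs⟩
    refine ⟨v, fun k => ?_⟩
    obtain ⟨hρ0, hρ1⟩ := hρ k
    have hS0 : (0:ℝ) ≤ ‖(inner ℂ (h k) (v k) : ℂ)‖ ^ 2 := by positivity
    have hI0 : (0:ℝ) ≤ ∑ j ∈ univ.erase k, ‖(inner ℂ (h k) (v j) : ℂ)‖ ^ 2 :=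
      Finset.sum_nonneg fun j _ => by positivity
    set S := ‖(inner ℂ (h k) (v k) : ℂ)‖ ^ 2 with hSdef
    set I := ∑ j ∈ univ.erase k, ‖(inner ℂ (h k) (v j) : ℂ)‖ ^ 2 with hIdef
    have h2 := hs k
    rw [SINR] at h2
    have hden : (0:ℝ) < ρ k * I + ρ k * σ2 k + δ2 k := by
      have := mul_nonneg hρ0.le hI0
      have := mul_pos hρ0 (hσ k)
      linarith [hδ k]
    rw [le_div_iff₀ hden] at h2
    have hden1 : (0:ℝ) < I + σ2 k + δ2 k := by linarith [hσ k, hδ k]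
    rw [le_div_iff₀ hden1]
    nlinarith [mul_pos (mul_pos (hγ k) (hδ k)) (by linarith : (0:ℝ) < 1 - ρ k), hρ0,
      mul_pos hρ0 (hγ k)]
  · rintro ⟨v, hs⟩
    refine ⟨fun j => ((Real.sqrt 2 : ℝ) : ℂ) • v j, fun _ => (1:ℝ)/2,
      fun k => ⟨by norm_num, by norm_num⟩, fun k => ?_⟩
    have hc : ‖(((Real.sqrt 2 : ℝ)) : ℂ)‖ ^ 2 = 2 := by
      rw [Complex.norm_real, Real.norm_eq_abs, abs_of_nonneg (Real.sqrt_nonneg 2),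
        Real.sq_sqrt (by norm_num : (0:ℝ) ≤ 2)]
    have key : ∀ j, ‖(inner ℂ (h k) (((Real.sqrt 2 : ℝ) : ℂ) • v j) : ℂ)‖ ^ 2
        = 2 * ‖(inner ℂ (h k) (v j) : ℂ)‖ ^ 2 := by
      intro j
      rw [inner_smul_right, norm_mul, mul_pow, hc]
    have hS0 : (0:ℝ) ≤ ‖(inner ℂ (h k) (v k) : ℂ)‖ ^ 2 := by positivity
    have hI0 : (0:ℝ) ≤ ∑ j ∈ univ.erase k, ‖(inner ℂ (h k) (v j) : ℂ)‖ ^ 2 :=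
      Finset.sum_nonneg fun j _ => by positivity
    have h2 := hs k
    have hden1 : (0:ℝ) < (∑ j ∈ univ.erase k, ‖(inner ℂ (h k) (v j) : ℂ)‖ ^ 2) + σ2 k + δ2 k := by
      linarith [hσ k, hδ k]
    rw [le_div_iff₀ hden1] at h2
    simp only [SINR]
    have hsum : ∑ j ∈ univ.erase k, ‖(inner ℂ (h k) (((Real.sqrt 2 : ℝ) : ℂ) • v j) : ℂ)‖ ^ 2
        = 2 * ∑ j ∈ univ.erase k, ‖(inner ℂ (h k) (v j) : ℂ)‖ ^ 2 := by
      rw [Finset.mul_sum]; exact Finset.sum_congr rfl fun j _ => key j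
    rw [hsum, key k]
    have hden2 : (0:ℝ) < (1:ℝ)/2 * (2 * ∑ j ∈ univ.erase k, ‖(inner ℂ (h k) (v j) : ℂ)‖ ^ 2)
        + (1:ℝ)/2 * σ2 k + δ2 k := by linarith [hσ k, hδ k]
    rw [le_div_iff₀ hden2]
    nlinarith [mul_pos (hγ k) (hσ k)]
end
end

section
/- Let ({X_k*}, {ρ_k*}) be an optimal solution of the SDR problem (a feasible point whose objective Σ_k Tr(X_k*) is minimal over the feasible set). Then both families of constraints are active at the optimum: for every k, (1/γ_k) h_k^H X_k* h_k − Σ_{j≠k} h_k^H X_j* h_k = σ_k² + δ_k²/ρ_k* and Σ_{j=1}^K h_k^H X_j* h_k = e_k/(ζ_k(1−ρ_k*)) − σ_k². -/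
set_option maxHeartbeats 4000000

noncomputable section

open Finset Matrix
open scoped ComplexOrder

/-- The (real) quadratic form `h^H X h` (its real part; it is real for Hermitian `X`). -/
def quadForm {Nt : ℕ} (h : Fin Nt → ℂ) (X : Matrix (Fin Nt) (Fin Nt) ℂ) : ℝ :=
  (star h ⬝ᵥ X *ᵥ h).re

lemma quadForm_nonneg {Nt : ℕ} {h : Fin Nt → ℂ} {X : Matrix (Fin Nt) (Fin Nt) ℂ}
    (hX : X.PosSemidef) : 0 ≤ quadForm h X := by
  simpa [quadForm] using hX.re_dotProduct_nonneg h

lemma quadForm_add {Nt : ℕ} (h : Fin Nt → ℂ) (A B : Matrix (Fin Nt) (Fin Nt) ℂ) :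
    quadForm h (A + B) = quadForm h A + quadForm h B := by
  simp [quadForm, Matrix.add_mulVec, dotProduct_add]

lemma quadForm_smul {Nt : ℕ} (h : Fin Nt → ℂ) (r : ℝ) (A : Matrix (Fin Nt) (Fin Nt) ℂ) :
    quadForm h (((r : ℂ)) • A) = r * quadForm h A := by
  simp only [quadForm, Matrix.smul_mulVec, dotProduct_smul, smul_eq_mul, Complex.mul_re,
    Complex.ofReal_re, Complex.ofReal_im]
  ring

lemma psd_smul {Nt : ℕ} {X : Matrix (Fin Nt) (Fin Nt) ℂ} {r : ℝ} (hr : 0 ≤ r)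
    (hX : X.PosSemidef) : (((r : ℂ)) • X).PosSemidef := by
  constructor
  · have := hX.1
    unfold Matrix.IsHermitian at *
    rw [conjTranspose_smul, this]
    simp
  · intro x
    have h2 := mul_nonneg (Complex.zero_le_real.mpr hr) (hX.2 x)
    simp only [Finsupp.sum, Finset.mul_sum] at h2
    simp only [Finsupp.sum, Matrix.smul_apply, smul_eq_mul]
    refine le_of_le_of_eq h2 ?_
    exact Finset.sum_congr rfl fun i _ => Finset.sum_congr rfl fun j _ => by ring

lemma trace_normSq {Nt : ℕ} (B : Matrix (Fin Nt) (Fin Nt) ℂ) :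
    (Bᴴ * B).trace.re = ∑ i, ∑ j, Complex.normSq (B j i) := by
  have htr : (Bᴴ * B).trace = ∑ i, ∑ j, star (B j i) * B j i := by
    simp [Matrix.trace, Matrix.diag, Matrix.mul_apply, Matrix.conjTranspose_apply]
  rw [htr]
  simp only [Complex.re_sum]
  refine Finset.sum_congr rfl fun i _ => Finset.sum_congr rfl fun j _ => ?_
  rw [Complex.star_def, ← Complex.normSq_eq_conj_mul_self, Complex.ofReal_re]

lemma trace_re_nonneg {Nt : ℕ} {X : Matrix (Fin Nt) (Fin Nt) ℂ} (hX : X.PosSemidef) :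
    0 ≤ X.trace.re := by
  obtain ⟨B, rfl⟩ : ∃ B, X = Bᴴ * B := by
    open scoped MatrixOrder in exact CStarAlgebra.nonneg_iff_eq_star_mul_self.mp hX.nonneg
  rw [trace_normSq]
  exact Finset.sum_nonneg fun i _ => Finset.sum_nonneg fun j _ => Complex.normSq_nonneg _

lemma trace_re_pos {Nt : ℕ} {h : Fin Nt → ℂ} {X : Matrix (Fin Nt) (Fin Nt) ℂ}
    (hX : X.PosSemidef) (hq : 0 < quadForm h X) : 0 < X.trace.re := by
  rcases (trace_re_nonneg hX).lt_or_eq with h1 | h1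
  · exact h1
  exfalso
  obtain ⟨B, rfl⟩ : ∃ B, X = Bᴴ * B := by
    open scoped MatrixOrder in exact CStarAlgebra.nonneg_iff_eq_star_mul_self.mp hX.nonneg
  have h2 : ∑ i, ∑ j, Complex.normSq (B j i) = 0 := by rw [← trace_normSq]; exact h1.symm
  have hB : B = 0 := by
    ext j i
    have hji : Complex.normSq (B j i) = 0 := by
      have h3 := (Finset.sum_eq_zero_iff_of_nonneg
        (fun i' _ => Finset.sum_nonneg fun j' _ => Complex.normSq_nonneg (B j' i'))).mp h2
        i (Finset.mem_univ i)
      exact (Finset.sum_eq_zero_iff_of_nonneg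
        (fun j' _ => Complex.normSq_nonneg (B j' i))).mp h3 j (Finset.mem_univ j)
    simpa using Complex.normSq_eq_zero.mp hji
  rw [hB] at hq
  simp [quadForm, Matrix.zero_mulVec] at hq

/-- Feasibility of the semidefinite relaxation (SDR) of the JBPS problem. -/
def SDRFeasible {K Nt : ℕ} (h : Fin K → (Fin Nt → ℂ)) (σ2 δ2 ζ γ e : Fin K → ℝ)
    (X : Fin K → Matrix (Fin Nt) (Fin Nt) ℂ) (ρ : Fin K → ℝ) : Prop :=
  (∀ k, (X k).PosSemidef) ∧ (∀ k, 0 < ρ k ∧ ρ k < 1) ∧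
  (∀ k, σ2 k + δ2 k / ρ k ≤
      (1 / γ k) * quadForm (h k) (X k) - ∑ j ∈ univ.erase k, quadForm (h k) (X j)) ∧
  (∀ k, e k / (ζ k * (1 - ρ k)) - σ2 k ≤ ∑ j, quadForm (h k) (X j))

lemma relax_rho {K Nt : ℕ} (h : Fin K → (Fin Nt → ℂ)) (σ2 δ2 ζ γ e : Fin K → ℝ)
    (hδ : ∀ k, 0 < δ2 k) (hζ : ∀ k, 0 < ζ k ∧ ζ k ≤ 1) (he : ∀ k, 0 < e k)
    (X : Fin K → Matrix (Fin Nt) (Fin Nt) ℂ) (ρ : Fin K → ℝ)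
    (hfeas : SDRFeasible h σ2 δ2 ζ γ e X ρ) (k : Fin K)
    (hslack : σ2 k + δ2 k / ρ k <
        (1 / γ k) * quadForm (h k) (X k) - ∑ j ∈ univ.erase k, quadForm (h k) (X j)
      ∨ e k / (ζ k * (1 - ρ k)) - σ2 k < ∑ j, quadForm (h k) (X j)) :
    ∃ ρ' : Fin K → ℝ, SDRFeasible h σ2 δ2 ζ γ e X ρ' ∧
      (σ2 k + δ2 k / ρ' k <
        (1 / γ k) * quadForm (h k) (X k) - ∑ j ∈ univ.erase k, quadForm (h k) (X j)) ∧
      (e k / (ζ k * (1 - ρ' k)) - σ2 k < ∑ j, quadForm (h k) (X j)) := by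
  obtain ⟨hPSD, hρ, hS, hE⟩ := hfeas
  obtain ⟨hρ0, hρ1⟩ := hρ k
  have hδk := hδ k
  have hζk := (hζ k).1
  have hek := he k
  rcases hslack with hsl | hsl
  · -- SINR slack : decrease ρ k
    obtain ⟨d, hd⟩ : ∃ d : ℝ, d = ((1 / γ k) * quadForm (h k) (X k)
        - ∑ j ∈ univ.erase k, quadForm (h k) (X j)) - (σ2 k + δ2 k / ρ k) := ⟨_, rfl⟩
    have hd0 : 0 < d := by simp only [hd]; linarith
    obtain ⟨m, hm⟩ : ∃ m : ℝ, m = min (ρ k / 2) (d * (ρ k)^2 / (4 * δ2 k)) := ⟨_, rfl⟩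
    have hm0 : 0 < m := by rw [hm]; positivity
    have hm1 : m ≤ ρ k / 2 := by rw [hm]; exact min_le_left _ _
    have hm2 : m ≤ d * (ρ k)^2 / (4 * δ2 k) := by rw [hm]; exact min_le_right _ _
    obtain ⟨r, hr⟩ : ∃ r : ℝ, r = ρ k - m := ⟨_, rfl⟩
    have hr0 : 0 < r := by simp only [hr]; linarith
    have hr1 : r < 1 := by simp only [hr]; linarith
    have hrρ : r < ρ k := by simp only [hr]; linarith
    refine ⟨fun i => if i = k then r else ρ i, ⟨hPSD, ?_, ?_, ?_⟩, ?_, ?_⟩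
    · intro i
      by_cases hik : i = k
      · simp [hik, hr0, hr1]
      · simp [hik]; exact hρ i
    · intro i
      by_cases hik : i = k
      · subst hik
        simp only [eq_self_iff_true, if_true]
        have key : δ2 i / r ≤ δ2 i / ρ i + d / 2 := by
          have heq : δ2 i / r - δ2 i / ρ i = δ2 i * m / (r * ρ i) := by
            field_simp
            rw [hr]; ring
          have hb : δ2 i * m / (r * ρ i) ≤ d / 2 := by
            rw [div_le_iff₀ (by positivity)]
            have h1 : m * (4 * δ2 i) ≤ d * (ρ i)^2 := (le_div_iff₀ (by positivity)).mp hm2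
            have h2 : (ρ i)^2 / 2 ≤ r * ρ i := by
              nlinarith [mul_le_mul_of_nonneg_right hm1 hρ0.le]
            have h3 : d * ((ρ i)^2/2) ≤ d * (r * ρ i) := mul_le_mul_of_nonneg_left h2 hd0.le
            linarith
          linarith
        have : σ2 i + δ2 i / ρ i + d =
            (1 / γ i) * quadForm (h i) (X i) - ∑ j ∈ univ.erase i, quadForm (h i) (X j) := by
          simp only [hd]; ring
        linarith
      · simp only [if_neg hik]; exact hS i
    · intro i
      by_cases hik : i = k
      · subst hik
        simp only [eq_self_iff_true, if_true]
        have key : e i / (ζ i * (1 - r)) < e i / (ζ i * (1 - ρ i)) := by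
          refine div_lt_div_of_pos_left hek (mul_pos hζk (by linarith)) ?_
          exact mul_lt_mul_of_pos_left (by linarith) hζk
        linarith [hE i]
      · simp only [if_neg hik]; exact hE i
    · simp only [eq_self_iff_true, if_true]
      have key : δ2 k / r ≤ δ2 k / ρ k + d / 2 := by
        have heq : δ2 k / r - δ2 k / ρ k = δ2 k * m / (r * ρ k) := by
          field_simp
          rw [hr]; ring
        have hb : δ2 k * m / (r * ρ k) ≤ d / 2 := by
          rw [div_le_iff₀ (by positivity)]
          have h1 : m * (4 * δ2 k) ≤ d * (ρ k)^2 := (le_div_iff₀ (by positivity)).mp hm2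
          have h2 : (ρ k)^2 / 2 ≤ r * ρ k := by
            nlinarith [mul_le_mul_of_nonneg_right hm1 hρ0.le]
          have h3 : d * ((ρ k)^2/2) ≤ d * (r * ρ k) := mul_le_mul_of_nonneg_left h2 hd0.le
          linarith
        linarith
      have : σ2 k + δ2 k / ρ k + d =
          (1 / γ k) * quadForm (h k) (X k) - ∑ j ∈ univ.erase k, quadForm (h k) (X j) := by
        simp only [hd]; ring
      linarith
    · simp only [eq_self_iff_true, if_true]
      have key : e k / (ζ k * (1 - r)) < e k / (ζ k * (1 - ρ k)) := by
        refine div_lt_div_of_pos_left hek (mul_pos hζk (by linarith)) ?_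
        exact mul_lt_mul_of_pos_left (by linarith) hζk
      linarith [hE k]
  · -- energy slack : increase ρ k
    obtain ⟨d, hd⟩ : ∃ d : ℝ, d = (∑ j, quadForm (h k) (X j)) - (e k / (ζ k * (1 - ρ k)) - σ2 k) := ⟨_, rfl⟩
    have hd0 : 0 < d := by simp only [hd]; linarith
    have h1ρ : (0:ℝ) < 1 - ρ k := by linarith
    obtain ⟨m, hm⟩ : ∃ m : ℝ, m = min ((1 - ρ k) / 2) (d * ζ k * (1 - ρ k)^2 / (4 * e k)) := ⟨_, rfl⟩
    have hm0 : 0 < m := by rw [hm]; exact lt_min (by linarith) (by positivity)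
    have hm1 : m ≤ (1 - ρ k) / 2 := by rw [hm]; exact min_le_left _ _
    have hm2 : m ≤ d * ζ k * (1 - ρ k)^2 / (4 * e k) := by rw [hm]; exact min_le_right _ _
    obtain ⟨r, hr⟩ : ∃ r : ℝ, r = ρ k + m := ⟨_, rfl⟩
    have hr0 : 0 < r := by simp only [hr]; linarith
    have hr1 : r < 1 := by simp only [hr]; linarith
    have hkey : e k / (ζ k * (1 - r)) ≤ e k / (ζ k * (1 - ρ k)) + d / 2 := by
      have h1r : (0:ℝ) < 1 - r := by linarith
      have h1ρ : (0:ℝ) < 1 - ρ k := by linarith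
      have heq : e k / (ζ k * (1 - r)) - e k / (ζ k * (1 - ρ k))
          = e k * m / (ζ k * ((1 - r) * (1 - ρ k))) := by
        field_simp
        rw [hr]; ring
      have hb : e k * m / (ζ k * ((1 - r) * (1 - ρ k))) ≤ d / 2 := by
        rw [div_le_iff₀ (by positivity)]
        have h1 : m * (4 * e k) ≤ d * ζ k * (1 - ρ k)^2 := (le_div_iff₀ (by positivity)).mp hm2
        have h2 : (1 - ρ k) / 2 ≤ 1 - r := by simp only [hr]; linarith
        have h3 : ζ k * ((1 - ρ k)^2/2) ≤ ζ k * ((1 - r) * (1 - ρ k)) := by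
          refine mul_le_mul_of_nonneg_left ?_ hζk.le
          nlinarith [mul_le_mul_of_nonneg_right h2 h1ρ.le]
        have h4 : d * (ζ k * ((1 - ρ k)^2/2)) ≤ d * (ζ k * ((1 - r) * (1 - ρ k))) :=
          mul_le_mul_of_nonneg_left h3 hd0.le
        linarith
      linarith
    have hδkey : δ2 k / r < δ2 k / ρ k := by
      apply div_lt_div_of_pos_left hδk hρ0
      linarith
    refine ⟨fun i => if i = k then r else ρ i, ⟨hPSD, ?_, ?_, ?_⟩, ?_, ?_⟩
    · intro i
      by_cases hik : i = k
      · simp [hik, hr0, hr1]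
      · simp [hik]; exact hρ i
    · intro i
      by_cases hik : i = k
      · subst hik; simp only [eq_self_iff_true, if_true]
        linarith [hS i]
      · simp only [if_neg hik]; exact hS i
    · intro i
      by_cases hik : i = k
      · subst hik; simp only [eq_self_iff_true, if_true]
        have : e i / (ζ i * (1 - ρ i)) - σ2 i + d = ∑ j, quadForm (h i) (X j) := by
          simp only [hd]; ring
        linarith
      · simp only [if_neg hik]; exact hE i
    · simp only [eq_self_iff_true, if_true]
      linarith [hS k]
    · simp only [eq_self_iff_true, if_true]
      have : e k / (ζ k * (1 - ρ k)) - σ2 k + d = ∑ j, quadForm (h k) (X j) := by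
        simp only [hd]; ring
      linarith

lemma improve {K Nt : ℕ} (h : Fin K → (Fin Nt → ℂ)) (σ2 δ2 ζ γ e : Fin K → ℝ)
    (hσ : ∀ k, 0 < σ2 k) (hδ : ∀ k, 0 < δ2 k) (hζ : ∀ k, 0 < ζ k ∧ ζ k ≤ 1)
    (hγ : ∀ k, 0 < γ k) (he : ∀ k, 0 < e k)
    (X : Fin K → Matrix (Fin Nt) (Fin Nt) ℂ) (ρ : Fin K → ℝ)
    (hfeas : SDRFeasible h σ2 δ2 ζ γ e X ρ) (k : Fin K)
    (hSlt : σ2 k + δ2 k / ρ k <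
      (1 / γ k) * quadForm (h k) (X k) - ∑ j ∈ univ.erase k, quadForm (h k) (X j))
    (hElt : e k / (ζ k * (1 - ρ k)) - σ2 k < ∑ j, quadForm (h k) (X j)) :
    ∃ X' ρ', SDRFeasible h σ2 δ2 ζ γ e X' ρ' ∧
      (∑ i, ((X' : Fin K → Matrix (Fin Nt) (Fin Nt) ℂ) i).trace).re
        < (∑ i, (X i).trace).re := by
  obtain ⟨hPSD, hρ, hS, hE⟩ := hfeas
  have hγk := hγ k
  have hγki : 0 < 1 / γ k := by positivity
  have hQ : ∀ i j, 0 ≤ quadForm (h i) (X j) := fun i j => quadForm_nonneg (hPSD j)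
  have hIk : 0 ≤ ∑ j ∈ univ.erase k, quadForm (h k) (X j) :=
    Finset.sum_nonneg fun j _ => hQ k j
  have hQkk : 0 < quadForm (h k) (X k) := by
    by_contra hc
    push_neg at hc
    have h2 : (1 / γ k) * quadForm (h k) (X k) ≤ 0 :=
      mul_nonpos_of_nonneg_of_nonpos hγki.le hc
    have h3 := hS k
    have h4 := div_pos (hδ k) (hρ k).1
    have h5 := hσ k
    linarith
  -- slack
  obtain ⟨c, hcdef⟩ : ∃ c : ℝ, c = min
      (((1 / γ k) * quadForm (h k) (X k) - ∑ j ∈ univ.erase k, quadForm (h k) (X j))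
        - (σ2 k + δ2 k / ρ k))
      ((∑ j, quadForm (h k) (X j)) - (e k / (ζ k * (1 - ρ k)) - σ2 k)) := ⟨_, rfl⟩
  have hc0 : 0 < c := by rw [hcdef]; exact lt_min (by linarith) (by linarith)
  have hcS : σ2 k + δ2 k / ρ k + c ≤
      (1 / γ k) * quadForm (h k) (X k) - ∑ j ∈ univ.erase k, quadForm (h k) (X j) := by
    have h1 : c ≤ ((1 / γ k) * quadForm (h k) (X k)
        - ∑ j ∈ univ.erase k, quadForm (h k) (X j)) - (σ2 k + δ2 k / ρ k) := by
      rw [hcdef]; exact min_le_left _ _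
    linarith
  have hcE : e k / (ζ k * (1 - ρ k)) - σ2 k + c ≤ ∑ j, quadForm (h k) (X j) := by
    have h1 : c ≤ (∑ j, quadForm (h k) (X j)) - (e k / (ζ k * (1 - ρ k)) - σ2 k) := by
      rw [hcdef]; exact min_le_right _ _
    linarith
  -- constants
  obtain ⟨B, hB⟩ : ∃ B : ℝ, B = (1 + 1 / γ k) * quadForm (h k) (X k) + 1 := ⟨_, rfl⟩
  have hB1 : 0 < B := by rw [hB]; positivity
  have hD : (1 + 1 / γ k) * quadForm (h k) (X k) ≤ B := by rw [hB]; linarith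
  have hQB : quadForm (h k) (X k) ≤ B := by
    rw [hB]; nlinarith [mul_nonneg hγki.le hQkk.le]
  have hKge1 : 1 ≤ K := k.pos
  have hKR : (0:ℝ) < (K:ℝ) := by exact_mod_cast k.pos
  have hKR1 : (1:ℝ) ≤ (K:ℝ) := by exact_mod_cast hKge1
  obtain ⟨s, hsdef⟩ : ∃ s : ℝ, s = min (1 / (2 * (K:ℝ))) (c / (4 * B * (K:ℝ))) := ⟨_, rfl⟩
  have hs0 : 0 < s := by rw [hsdef]; exact lt_min (by positivity) (by positivity)
  have hs1 : s ≤ 1 / (2 * (K:ℝ)) := by rw [hsdef]; exact min_le_left _ _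
  have hs2 : s ≤ c / (4 * B * (K:ℝ)) := by rw [hsdef]; exact min_le_right _ _
  have hsKB : s * ((K:ℝ) * B) ≤ c / 4 := by
    have h1 : s * (4 * B * (K:ℝ)) ≤ c := (le_div_iff₀ (by positivity)).mp hs2
    linarith
  have hshalf : (K:ℝ) * s ≤ 1 / 2 := by
    have h1 : s * (2 * (K:ℝ)) ≤ 1 := (le_div_iff₀ (by positivity)).mp hs1
    linarith
  obtain ⟨s', hs'def⟩ : ∃ s' : ℝ, s' = min s (c / (4 * B)) := ⟨_, rfl⟩
  have hs'0 : 0 < s' := by rw [hs'def]; exact lt_min hs0 (by positivity)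
  have hs's : s' ≤ s := by rw [hs'def]; exact min_le_left _ _
  have hs'c : s' ≤ c / (4 * B) := by rw [hs'def]; exact min_le_right _ _
  have hBs' : B * s' ≤ c / 4 := by
    have h1 : B * s' ≤ B * (c / (4 * B)) := mul_le_mul_of_nonneg_left hs'c hB1.le
    have h2 : B * (c / (4 * B)) = c / 4 := by field_simp
    linarith
  -- rho decreases
  obtain ⟨η, hη⟩ : ∃ η : Fin K → ℝ, η = fun j =>
    min (ρ j / 2) (s * quadForm (h j) (X k) * (ρ j)^2 / (2 * δ2 j)) := ⟨_, rfl⟩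
  have hη0 : ∀ j, 0 ≤ η j := by
    intro j
    simp only [hη]
    exact le_min (by linarith [(hρ j).1])
      (div_nonneg (mul_nonneg (mul_nonneg hs0.le (hQ j k)) (sq_nonneg _))
        (by linarith [hδ j]))
  have hη1 : ∀ j, η j ≤ ρ j / 2 := fun j => by
    simp only [hη]; exact min_le_left _ _
  have hη2 : ∀ j, η j * (2 * δ2 j) ≤ s * quadForm (h j) (X k) * (ρ j)^2 := by
    intro j
    have h1 : η j ≤ s * quadForm (h j) (X k) * (ρ j)^2 / (2 * δ2 j) := by
      simp only [hη]; exact min_le_right _ _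
    exact (le_div_iff₀ (by linarith [hδ j])).mp h1
  have hηpos : ∀ j, 0 < quadForm (h j) (X k) → 0 < η j := by
    intro j hq
    have hρj := (hρ j).1
    have hδj := hδ j
    simp only [hη]
    exact lt_min (by linarith) (by positivity)
  -- tau
  obtain ⟨g, hg⟩ : ∃ g : Fin K → ℝ, g = fun j =>
    if 0 < quadForm (h j) (X k) ∧ j ≠ k then
      min s' (e j * η j / (ζ j * quadForm (h j) (X k))) else s' := ⟨_, rfl⟩
  have hne : (Finset.univ : Finset (Fin K)).Nonempty := ⟨k, Finset.mem_univ k⟩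
  obtain ⟨τ, hτdef⟩ : ∃ τ : ℝ, τ = Finset.univ.inf' hne g := ⟨_, rfl⟩
  have hτle : ∀ j, τ ≤ g j := fun j => by
    rw [hτdef]; exact Finset.inf'_le g (Finset.mem_univ j)
  have hτs' : τ ≤ s' := by
    have h1 := hτle k
    simp only [hg] at h1
    rw [if_neg (by simp : ¬(0 < quadForm (h k) (X k) ∧ k ≠ k))] at h1
    exact h1
  have hτpos : 0 < τ := by
    rw [hτdef, Finset.lt_inf'_iff]
    intro j _
    simp only [hg]
    by_cases hcond : 0 < quadForm (h j) (X k) ∧ j ≠ k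
    · rw [if_pos hcond]
      refine lt_min hs'0 (div_pos (mul_pos (he j) (hηpos j hcond.1)) ?_)
      exact mul_pos (hζ j).1 hcond.1
    · rw [if_neg hcond]; exact hs'0
  have hτj : ∀ j, j ≠ k → 0 < quadForm (h j) (X k) →
      τ * quadForm (h j) (X k) ≤ e j * η j / ζ j := by
    intro j hjk hq
    have h1 := hτle j
    simp only [hg] at h1
    rw [if_pos (show 0 < quadForm (h j) (X k) ∧ j ≠ k from ⟨hq, hjk⟩)] at h1
    have h2 : τ ≤ e j * η j / (ζ j * quadForm (h j) (X k)) :=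
      le_trans h1 (min_le_right _ _)
    have h3 : τ * (ζ j * quadForm (h j) (X k)) ≤ e j * η j :=
      (le_div_iff₀ (mul_pos (hζ j).1 hq)).mp h2
    rw [le_div_iff₀ (hζ j).1]
    nlinarith
  have hτhalf : τ ≤ 1 / 2 := by
    have h1 : 1 / (2 * (K:ℝ)) ≤ 1 / 2 := by
      apply div_le_div_of_nonneg_left (by norm_num) (by norm_num)
      linarith
    linarith [hτs', hs's, hs1]
  -- coefficients
  obtain ⟨coef, hcoef⟩ : ∃ coef : Fin K → ℝ,
    coef = fun j => if j = k then -(((K:ℝ) - 1) * s) - τ else s := ⟨_, rfl⟩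
  have hcoefk : coef k = -(((K:ℝ) - 1) * s) - τ := by simp [hcoef]
  have hcoefne : ∀ j, j ≠ k → coef j = s := fun j hj => by simp [hcoef, hj]
  have hKm1 : ((Finset.univ.erase k).card : ℝ) = (K:ℝ) - 1 := by
    rw [Finset.card_erase_of_mem (Finset.mem_univ k), Finset.card_univ, Fintype.card_fin]
    push_cast [Nat.cast_sub hKge1]
    ring
  have hcoefsum : ∑ j, coef j = -τ := by
    rw [← Finset.add_sum_erase _ coef (Finset.mem_univ k), hcoefk]
    have h1 : ∑ j ∈ Finset.univ.erase k, coef j = ((Finset.univ.erase k).card : ℝ) * s := by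
      rw [Finset.sum_congr rfl fun j hj => hcoefne j (Finset.ne_of_mem_erase hj)]
      rw [Finset.sum_const, nsmul_eq_mul]
    rw [h1, hKm1]
    ring
  have hcoeferase : ∀ i, ∑ j ∈ Finset.univ.erase i, coef j = -τ - coef i := by
    intro i
    rw [Finset.sum_erase_eq_sub (Finset.mem_univ i), hcoefsum]
  have hcoefk_ge : 0 ≤ 1 + coef k := by
    rw [hcoefk]
    have h1 : ((K:ℝ) - 1) * s ≤ (K:ℝ) * s := by
      have : ((K:ℝ) - 1) * s + s = (K:ℝ) * s := by ring
      linarith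
    linarith [hτs', hs's, hs1, hshalf, hτpos.le]
  -- new point
  obtain ⟨X', hX'⟩ : ∃ X' : Fin K → Matrix (Fin Nt) (Fin Nt) ℂ,
    X' = fun j => X j + ((coef j : ℝ) : ℂ) • X k := ⟨_, rfl⟩
  obtain ⟨ρ', hρ'⟩ : ∃ ρ' : Fin K → ℝ,
    ρ' = fun j => if j = k then ρ k else ρ j - η j := ⟨_, rfl⟩
  have hquad : ∀ i j, quadForm (h i) (X' j)
      = quadForm (h i) (X j) + coef j * quadForm (h i) (X k) := by
    intro i j
    simp only [hX']
    rw [quadForm_add, quadForm_smul]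
  have hsum : ∀ (i : Fin K) (Sf : Finset (Fin K)),
      ∑ j ∈ Sf, quadForm (h i) (X' j)
        = (∑ j ∈ Sf, quadForm (h i) (X j)) + (∑ j ∈ Sf, coef j) * quadForm (h i) (X k) := by
    intro i Sf
    simp_rw [hquad]
    rw [Finset.sum_add_distrib, Finset.sum_mul]
  refine ⟨X', ρ', ⟨?_, ?_, ?_, ?_⟩, ?_⟩
  · -- PSD
    intro i
    by_cases hik : i = k
    · subst hik
      have heq : X' i = (((1 + coef i : ℝ)) : ℂ) • X i := by
        simp only [hX']
        push_cast
        rw [add_smul, one_smul]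
      rw [heq]
      exact psd_smul hcoefk_ge (hPSD i)
    · simp only [hX']
      exact Matrix.PosSemidef.add (hPSD i) (psd_smul (by rw [hcoefne i hik]; exact hs0.le) (hPSD k))
  · -- rho bounds
    intro i
    by_cases hik : i = k
    · simp only [hρ', if_pos hik]
      exact hρ k
    · simp only [hρ', if_neg hik]
      constructor
      · linarith [(hρ i).1, hη1 i]
      · linarith [(hρ i).2, hη0 i]
  · -- SINR
    intro i
    rw [hsum i _, hquad i i, hcoeferase i]
    by_cases hik : i = k
    · subst hik
      simp only [hρ', eq_self_iff_true, if_true]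
      rw [hcoefk]
      have e1 : (1 + 1 / γ i) * quadForm (h i) (X i) * (((K:ℝ) - 1) * s)
          ≤ B * (((K:ℝ) - 1) * s) :=
        mul_le_mul_of_nonneg_right hD (mul_nonneg (by linarith) hs0.le)
      have e2 : B * (((K:ℝ) - 1) * s) ≤ c / 4 := by
        have h1 : ((K:ℝ) - 1) * s ≤ (K:ℝ) * s := by
          have : ((K:ℝ) - 1) * s + s = (K:ℝ) * s := by ring
          linarith
        have h2 : B * (((K:ℝ) - 1) * s) ≤ B * ((K:ℝ) * s) :=
          mul_le_mul_of_nonneg_left h1 hB1.le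
        have h3 : B * ((K:ℝ) * s) = s * ((K:ℝ) * B) := by ring
        linarith [hsKB]
      have e3 : (1 + 1 / γ i) * quadForm (h i) (X i) * τ ≤ B * τ :=
        mul_le_mul_of_nonneg_right hD hτpos.le
      have e4 : B * τ ≤ B * s' := mul_le_mul_of_nonneg_left hτs' hB1.le
      have e5 : 0 ≤ τ * quadForm (h i) (X i) := mul_nonneg hτpos.le hQkk.le
      nlinarith [hcS]
    · simp only [hρ', if_neg hik]
      rw [hcoefne i hik]
      have hρi0 := (hρ i).1
      have hρi1 := (hρ i).2
      have hδi := hδ i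
      have hpos : 0 < ρ i - η i := by linarith [hη1 i, hρi0]
      have key : δ2 i / (ρ i - η i) ≤ δ2 i / ρ i + s * quadForm (h i) (X k) := by
        have heq : δ2 i / (ρ i - η i) - δ2 i / ρ i
            = δ2 i * η i / ((ρ i - η i) * ρ i) := by
          field_simp
          ring
        have hb : δ2 i * η i / ((ρ i - η i) * ρ i) ≤ s * quadForm (h i) (X k) := by
          rw [div_le_iff₀ (by positivity)]
          have h2 : (ρ i)^2 / 2 ≤ (ρ i - η i) * ρ i := by
            nlinarith [mul_le_mul_of_nonneg_right (hη1 i) hρi0.le]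
          have h3 : s * quadForm (h i) (X k) * ((ρ i)^2 / 2)
              ≤ s * quadForm (h i) (X k) * ((ρ i - η i) * ρ i) :=
            mul_le_mul_of_nonneg_left h2 (mul_nonneg hs0.le (hQ i k))
          linarith [hη2 i]
        linarith
      have hSi := hS i
      have e6 : 0 ≤ τ * quadForm (h i) (X k) := mul_nonneg hτpos.le (hQ i k)
      have hγi := hγ i
      have e7 : 0 ≤ (1 / γ i) * (s * quadForm (h i) (X k)) :=
        mul_nonneg (by positivity) (mul_nonneg hs0.le (hQ i k))
      nlinarith
  · -- energy
    intro i
    rw [hsum i _, hcoefsum]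
    by_cases hik : i = k
    · subst hik
      simp only [hρ', eq_self_iff_true, if_true]
      have e1 : τ * quadForm (h i) (X i) ≤ s' * quadForm (h i) (X i) :=
        mul_le_mul_of_nonneg_right hτs' hQkk.le
      have e2 : s' * quadForm (h i) (X i) ≤ s' * B :=
        mul_le_mul_of_nonneg_left hQB hs'0.le
      nlinarith [hcE, hBs']
    · simp only [hρ', if_neg hik]
      have hρi0 := (hρ i).1
      have hρi1 := (hρ i).2
      have hζi := (hζ i).1
      have hEi := hE i
      rcases (hQ i k).lt_or_eq with hQik | hQik
      · -- Q i k > 0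
        have h1ρ : (0:ℝ) < 1 - ρ i := by linarith
        have h1ρη : (0:ℝ) < 1 - ρ i + η i := by linarith [hη0 i]
        have heq : e i / (ζ i * (1 - ρ i)) - e i / (ζ i * (1 - ρ i + η i))
            = e i * η i / (ζ i * ((1 - ρ i) * (1 - ρ i + η i))) := by
          field_simp
          ring
        have hD1 : (1 - ρ i) * (1 - ρ i + η i) ≤ 1 := by
          nlinarith [hη1 i, hη0 i]
        have hdpos : 0 < ζ i * ((1 - ρ i) * (1 - ρ i + η i)) :=
          mul_pos hζi (mul_pos h1ρ h1ρη)
        have hdle : ζ i * ((1 - ρ i) * (1 - ρ i + η i)) ≤ ζ i :=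
          mul_le_of_le_one_right hζi.le hD1
        have hmono : e i * η i / ζ i ≤ e i * η i / (ζ i * ((1 - ρ i) * (1 - ρ i + η i))) :=
          div_le_div_of_nonneg_left (mul_nonneg (he i).le (hη0 i)) hdpos hdle
        have hτi := hτj i hik hQik
        have hfin : 1 - (ρ i - η i) = 1 - ρ i + η i := by ring
        rw [hfin]
        linarith
      · -- Q i k = 0
        have hηz : η i = 0 := by
          simp only [hη]
          rw [← hQik]
          simp only [mul_zero, zero_mul, zero_div]
          exact min_eq_right (by linarith)
        rw [hηz, ← hQik]
        simpa using hEi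
  · -- trace decreases
    have htr : ∑ i, (X' i).trace = (∑ i, (X i).trace) + ((-τ : ℝ) : ℂ) * (X k).trace := by
      simp only [hX', Matrix.trace_add, Matrix.trace_smul, smul_eq_mul]
      rw [Finset.sum_add_distrib, ← Finset.sum_mul]
      congr 1
      rw [← Complex.ofReal_sum, hcoefsum]
    rw [htr]
    have hpos := trace_re_pos (hPSD k) hQkk
    simp only [Complex.add_re, Complex.mul_re, Complex.ofReal_re, Complex.ofReal_im]
    nlinarith

theorem sdr_constraints_active_at_optimum (K Nt : ℕ) (hK : 1 ≤ K) (hNt : 1 ≤ Nt)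
    (h : Fin K → (Fin Nt → ℂ)) (σ2 δ2 ζ γ e : Fin K → ℝ)
    (hσ : ∀ k, 0 < σ2 k) (hδ : ∀ k, 0 < δ2 k)
    (hζ : ∀ k, 0 < ζ k ∧ ζ k ≤ 1) (hγ : ∀ k, 0 < γ k) (he : ∀ k, 0 < e k)
    (X : Fin K → Matrix (Fin Nt) (Fin Nt) ℂ) (ρ : Fin K → ℝ)
    (hfeas : SDRFeasible h σ2 δ2 ζ γ e X ρ)
    (hopt : ∀ (X' : Fin K → Matrix (Fin Nt) (Fin Nt) ℂ) (ρ' : Fin K → ℝ),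
      SDRFeasible h σ2 δ2 ζ γ e X' ρ' →
      (∑ k, (X k).trace).re ≤ (∑ k, (X' k).trace).re) :
    ∀ k, (1 / γ k) * quadForm (h k) (X k) - ∑ j ∈ univ.erase k, quadForm (h k) (X j)
        = σ2 k + δ2 k / ρ k ∧
      (∑ j, quadForm (h k) (X j)) = e k / (ζ k * (1 - ρ k)) - σ2 k := by
  intro k
  have hSk := hfeas.2.2.1 k
  have hEk := hfeas.2.2.2 k
  have key : (σ2 k + δ2 k / ρ k <
        (1 / γ k) * quadForm (h k) (X k) - ∑ j ∈ univ.erase k, quadForm (h k) (X j)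
      ∨ e k / (ζ k * (1 - ρ k)) - σ2 k < ∑ j, quadForm (h k) (X j)) → False := by
    intro hslack
    obtain ⟨ρ1, hfeas1, hS1, hE1⟩ := relax_rho h σ2 δ2 ζ γ e hδ hζ he X ρ hfeas k hslack
    obtain ⟨X', ρ', hfeas', hlt⟩ :=
      improve h σ2 δ2 ζ γ e hσ hδ hζ hγ he X ρ1 hfeas1 k hS1 hE1
    have := hopt X' ρ' hfeas'
    linarith
  constructor
  · by_contra hne
    exact key (Or.inl (lt_of_le_of_ne hSk fun heq => hne heq.symm))
  · by_contra hne
    exact key (Or.inr (lt_of_le_of_ne hEk fun heq => hne heq.symm))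
end
end

section
/- Let ({X_k*}, {ρ_k*}) be an optimal solution of the SDR problem (a feasible point whose objective Σ_k Tr(X_k*) is minimal over the feasible set). Then rank(X_k*) = 1 for every k = 1,…,K; i.e., the semidefinite relaxation of the JBPS problem is tight. -/
noncomputable section

open Finset Matrix
open scoped ComplexOrder

namespace JBPS

variable {K Nt : ℕ}

/-! ### Scalar helper lemmas -/

lemma comb_lt {a b x y p : ℝ} (ha : 0 ≤ a) (hb : 0 ≤ b) (hab : a + b = 1)
    (hx : x < p) (hy : y < p) : a * x + b * y < p := by
  rcases eq_or_lt_of_le ha with h | h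
  · have hb1 : b = 1 := by linarith
    simp [← h, hb1]; linarith
  · have h1 : a * x < a * p := by exact (mul_lt_mul_iff_right₀ h).mpr hx
    have h2 : b * y ≤ b * p := mul_le_mul_of_nonneg_left hy.le hb
    have h3 : a * p + b * p = p := by rw [← add_mul, hab, one_mul]
    linarith

lemma comb_pos {a b x y : ℝ} (ha : 0 ≤ a) (hb : 0 ≤ b) (hab : a + b = 1)
    (hx : 0 < x) (hy : 0 < y) : 0 < a * x + b * y := by
  rcases eq_or_lt_of_le ha with h | h
  · have hb1 : b = 1 := by linarith
    simp [← h, hb1]; linarith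
  · have h1 : 0 < a * x := mul_pos h hx
    have h2 : 0 ≤ b * y := mul_nonneg hb hy.le
    linarith

lemma div_comb {a b x y c : ℝ} (ha : 0 ≤ a) (hb : 0 ≤ b) (hab : a + b = 1)
    (hx : 0 < x) (hy : 0 < y) (hc : 0 ≤ c) :
    c / (a * x + b * y) ≤ a * (c / x) + b * (c / y) := by
  have hxy : 0 < a * x + b * y := comb_pos ha hb hab hx hy
  have e1 : a * (c / x) + b * (c / y) = (a * c * y + b * c * x) / (x * y) := by
    field_simp
  rw [e1, div_le_div_iff₀ hxy (mul_pos hx hy)]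
  have hb' : b = 1 - a := by linarith
  subst hb'
  nlinarith [mul_nonneg (mul_nonneg (mul_nonneg ha hb) hc) (sq_nonneg (x - y))]

/-! ### quadForm lemmas -/

lemma quadForm_nonneg {h : Fin Nt → ℂ} {X : Matrix (Fin Nt) (Fin Nt) ℂ}
    (hX : X.PosSemidef) : 0 ≤ quadForm h X :=
  (Complex.le_def.mp (hX.dotProduct_mulVec_nonneg h)).1

lemma quadForm_add (h : Fin Nt → ℂ) (X Y : Matrix (Fin Nt) (Fin Nt) ℂ) :
    quadForm h (X + Y) = quadForm h X + quadForm h Y := by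
  simp [quadForm, add_mulVec, dotProduct_add]

lemma quadForm_smul (h : Fin Nt → ℂ) (r : ℝ) (X : Matrix (Fin Nt) (Fin Nt) ℂ) :
    quadForm h ((r : ℂ) • X) = r * quadForm h X := by
  simp [quadForm, smul_mulVec, dotProduct_smul, Complex.re_ofReal_mul]

lemma quadForm_neg (h : Fin Nt → ℂ) (X : Matrix (Fin Nt) (Fin Nt) ℂ) :
    quadForm h (-X) = -quadForm h X := by
  simp [quadForm, neg_mulVec]

lemma quadForm_zero (h : Fin Nt → ℂ) : quadForm h (0 : Matrix (Fin Nt) (Fin Nt) ℂ) = 0 := by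
  simp [quadForm]

lemma psd_smul {X : Matrix (Fin Nt) (Fin Nt) ℂ} (hX : X.PosSemidef) {r : ℝ} (hr : 0 ≤ r) :
    ((r : ℂ) • X).PosSemidef := by
  refine Matrix.PosSemidef.of_dotProduct_mulVec_nonneg ?_ ?_
  · unfold Matrix.IsHermitian
    rw [conjTranspose_smul, hX.1.eq, Complex.star_def, Complex.conj_ofReal]
  · intro x
    rw [smul_mulVec, dotProduct_smul]
    have h0 := hX.dotProduct_mulVec_nonneg x
    rw [Complex.le_def] at h0 ⊢
    constructor
    · simp only [Complex.smul_re, Complex.ofReal_re, smul_eq_mul, Complex.re_ofReal_mul,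
        Complex.zero_re]
      exact mul_nonneg hr h0.1
    · have himz : (star x ⬝ᵥ X *ᵥ x).im = 0 := by rw [← h0.2]; simp
      show Complex.im 0 = ((r : ℂ) * (star x ⬝ᵥ X *ᵥ x)).im
      simp [Complex.mul_im, himz]

lemma vecMulVec_mulVec' (w v : Fin Nt → ℂ) :
    (vecMulVec w (star w)) *ᵥ v = (star w ⬝ᵥ v) • w := by
  ext i
  simp [vecMulVec_apply, mulVec, dotProduct, Finset.mul_sum, mul_comm, mul_left_comm, mul_assoc]

lemma dot_vecMulVec (w v : Fin Nt → ℂ) :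
    star v ⬝ᵥ (vecMulVec w (star w)) *ᵥ v = (Complex.normSq (star w ⬝ᵥ v) : ℂ) := by
  rw [vecMulVec_mulVec', dotProduct_smul, smul_eq_mul]
  have h1 : star v ⬝ᵥ w = star (star w ⬝ᵥ v) := by
    rw [star_dotProduct]
  rw [h1, Complex.star_def, Complex.mul_conj]

lemma quadForm_vecMulVec (h v : Fin Nt → ℂ) :
    quadForm h (vecMulVec v (star v)) = Complex.normSq (star h ⬝ᵥ v) := by
  unfold quadForm
  rw [dot_vecMulVec, Complex.ofReal_re]
  rw [show star v ⬝ᵥ h = star (star h ⬝ᵥ v) from star_dotProduct v h]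
  simp [Complex.star_def, Complex.normSq_conj]

lemma vecMulVec_hermitian (w : Fin Nt → ℂ) : (vecMulVec w (star w)).IsHermitian := by
  unfold Matrix.IsHermitian
  ext i j
  simp [conjTranspose_apply, vecMulVec_apply, mul_comm]

lemma psd_vecMulVec (v : Fin Nt → ℂ) : (vecMulVec v (star v)).PosSemidef := by
  refine Matrix.PosSemidef.of_dotProduct_mulVec_nonneg (vecMulVec_hermitian v) (fun x => ?_)
  rw [dot_vecMulVec]
  exact Complex.zero_le_real.mpr (Complex.normSq_nonneg _)

/-! ### The reduced convex problem -/

def Qv (γ σ2 : Fin K → ℝ) (h : Fin K → Fin Nt → ℂ)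
    (X : Fin K → Matrix (Fin Nt) (Fin Nt) ℂ) (k : Fin K) : ℝ :=
  (1 / γ k) * quadForm (h k) (X k) - (∑ j ∈ univ.erase k, quadForm (h k) (X j)) - σ2 k

def Ev (σ2 : Fin K → ℝ) (h : Fin K → Fin Nt → ℂ)
    (X : Fin K → Matrix (Fin Nt) (Fin Nt) ℂ) (k : Fin K) : ℝ :=
  (∑ j, quadForm (h k) (X j)) + σ2 k

def trRe (X : Fin K → Matrix (Fin Nt) (Fin Nt) ℂ) : ℝ := (∑ k, (X k).trace).re

def Dom (γ σ2 : Fin K → ℝ) (h : Fin K → Fin Nt → ℂ)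
    (X : Fin K → Matrix (Fin Nt) (Fin Nt) ℂ) : Prop :=
  (∀ k, (X k).PosSemidef) ∧ (∀ k, 0 < Qv γ σ2 h X k) ∧ (∀ k, 0 < Ev σ2 h X k)

def gfun (γ σ2 δ2 ζ e : Fin K → ℝ) (h : Fin K → Fin Nt → ℂ)
    (X : Fin K → Matrix (Fin Nt) (Fin Nt) ℂ) (k : Fin K) : ℝ :=
  δ2 k / Qv γ σ2 h X k + e k / (ζ k * Ev σ2 h X k) - 1

end JBPS
namespace JBPS

variable {K : ℕ} {P : Type*}

theorem abstract_kkt (Dm : P → Prop) (tr : P → ℝ) (g : P → Fin K → ℝ)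
    (mix : ℝ → ℝ → P → P → P)
    (hmix : ∀ a b x y, 0 ≤ a → 0 ≤ b → a + b = 1 → Dm x → Dm y →
      Dm (mix a b x y) ∧ tr (mix a b x y) ≤ a * tr x + b * tr y ∧
      ∀ k, g (mix a b x y) k ≤ a * g x k + b * g y k)
    (x₀ : P) (hx₀ : Dm x₀) (hg₀ : ∀ k, g x₀ k ≤ 0)
    (xS : P) (hxS : Dm xS) (hgS : ∀ k, g xS k < 0)
    (hopt : ∀ x, Dm x → (∀ k, g x k ≤ 0) → tr x₀ ≤ tr x) :
    ∃ lam : Fin K → ℝ, (∀ k, 0 ≤ lam k) ∧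
      ∀ x, Dm x → tr x₀ ≤ tr x + ∑ k, lam k * g x k := by
  classical
  set p : ℝ := tr x₀ with hp
  -- the two convex sets in ℝ × (Fin K → ℝ)
  set A : Set (ℝ × (Fin K → ℝ)) :=
    {y | ∃ x, Dm x ∧ tr x ≤ y.1 ∧ ∀ k, g x k ≤ y.2 k} with hA
  set B : Set (ℝ × (Fin K → ℝ)) :=
    {y | y.1 < p} ∩ ⋂ k, {y | y.2 k < 0} with hB
  have memB : ∀ y : ℝ × (Fin K → ℝ), y ∈ B ↔ y.1 < p ∧ ∀ k, y.2 k < 0 := by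
    intro y; simp [hB, Set.mem_iInter]
  have convB : Convex ℝ B := by
    intro y hy z hz a b ha hb hab
    rw [memB] at hy hz ⊢
    constructor
    · have : a * y.1 + b * z.1 < p := comb_lt ha hb hab hy.1 hz.1
      simpa [smul_eq_mul] using this
    · intro k
      have : a * y.2 k + b * z.2 k < 0 := comb_lt ha hb hab (hy.2 k) (hz.2 k)
      simpa [smul_eq_mul] using this
  have openB : IsOpen B := by
    refine (isOpen_lt continuous_fst continuous_const).inter
      (isOpen_iInter_of_finite fun k => isOpen_lt ?_ continuous_const)
    exact (continuous_apply k).comp continuous_snd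
  have convA : Convex ℝ A := by
    rintro y₁ ⟨x₁, hD₁, ht₁, hg₁⟩ y₂ ⟨x₂, hD₂, ht₂, hg₂⟩ a b ha hb hab
    obtain ⟨hDm, htm, hgm⟩ := hmix a b x₁ x₂ ha hb hab hD₁ hD₂
    refine ⟨mix a b x₁ x₂, hDm, ?_, ?_⟩
    · have : a * tr x₁ + b * tr x₂ ≤ a * y₁.1 + b * y₂.1 :=
        add_le_add (mul_le_mul_of_nonneg_left ht₁ ha) (mul_le_mul_of_nonneg_left ht₂ hb)
      simpa [smul_eq_mul] using htm.trans this
    · intro k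
      have : a * g x₁ k + b * g x₂ k ≤ a * y₁.2 k + b * y₂.2 k :=
        add_le_add (mul_le_mul_of_nonneg_left (hg₁ k) ha)
          (mul_le_mul_of_nonneg_left (hg₂ k) hb)
      simpa [smul_eq_mul] using (hgm k).trans this
  have disjBA : Disjoint B A := by
    rw [Set.disjoint_left]
    rintro y hyB ⟨x, hDx, htx, hgx⟩
    rw [memB] at hyB
    have h1 : tr x₀ ≤ tr x := hopt x hDx fun k => (hgx k).trans (hyB.2 k).le
    have : tr x₀ ≤ y.1 := h1.trans htx
    exact absurd hyB.1 (not_lt.mpr this)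
  obtain ⟨f, u, hfB, hfA⟩ := geometric_hahn_banach_open convB openB convA disjBA
  set lam0 : ℝ := f (1, 0) with hlam0def
  set m : Fin K → ℝ := fun k => f (0, Pi.single k 1) with hmdef
  have hdec : ∀ y : ℝ × (Fin K → ℝ), f y = y.1 * lam0 + ∑ k, y.2 k * m k := by
    intro y
    have hy : y = y.1 • ((1 : ℝ), (0 : Fin K → ℝ)) +
        ∑ k, y.2 k • (((0 : ℝ), Pi.single k (1 : ℝ)) : ℝ × (Fin K → ℝ)) := by
      refine Prod.ext ?_ ?_
      · simp [Prod.fst_sum]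
      · simp only [Prod.snd_add, Prod.smul_snd, Prod.snd_sum]
        funext i
        simp [Finset.sum_apply, Pi.single_apply, smul_eq_mul]
    conv_lhs => rw [hy]
    rw [map_add, map_sum]
    simp only [_root_.map_smul, smul_eq_mul]
    rfl
  -- nonnegativity of the multipliers
  have hm : ∀ k, 0 ≤ m k := by
    intro k
    by_contra hneg
    push_neg at hneg
    set c : ℝ := -m k with hc
    have hcpos : 0 < c := by simp only [hc]; linarith
    set C0 : ℝ := (p - 1) * lam0 + ∑ j, (-1 : ℝ) * m j with hC0
    have hval : ∀ t : ℝ, 0 ≤ t →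
        f (p - 1, fun j => if j = k then (-1 - t) else (-1)) = C0 + t * c := by
      intro t ht
      rw [hdec]
      have hsum : ∑ j, (if j = k then (-1 - t : ℝ) else (-1)) * m j
          = (∑ j, (-1 : ℝ) * m j) + t * c := by
        have : ∀ j ∈ univ, (if j = k then (-1 - t : ℝ) else (-1)) * m j
            = (-1 : ℝ) * m j + (if j = k then -t * m j else 0) := by
          intro j _
          by_cases hj : j = k <;> simp [hj] <;> ring
        rw [Finset.sum_congr rfl this, Finset.sum_add_distrib, Finset.sum_ite_eq' univ k]
        simp [hc]
        try ring
      simp only [hsum, hC0]; ring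
    have hmemB : ∀ t : ℝ, 0 ≤ t →
        ((p - 1, fun j => if j = k then (-1 - t) else (-1)) : ℝ × (Fin K → ℝ)) ∈ B := by
      intro t ht
      rw [memB]
      refine ⟨by show p - 1 < p; linarith, fun j => ?_⟩
      show (if j = k then (-1 - t : ℝ) else (-1)) < 0
      by_cases hj : j = k <;> simp [hj] <;> linarith
    set t : ℝ := max 0 ((u - C0) / c) with htd
    have ht0 : 0 ≤ t := le_max_left _ _
    have h1 : (u - C0) / c ≤ t := le_max_right _ _
    have h2 : u - C0 ≤ t * c := by
      calc u - C0 = ((u - C0) / c) * c := (div_mul_cancel₀ _ hcpos.ne').symm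
        _ ≤ t * c := mul_le_mul_of_nonneg_right h1 hcpos.le
    have h3 := hfB _ (hmemB t ht0)
    rw [hval t ht0] at h3
    linarith
  have hlam0 : 0 ≤ lam0 := by
    by_contra hneg
    push_neg at hneg
    set c : ℝ := -lam0 with hc
    have hcpos : 0 < c := by simp only [hc]; linarith
    set C0 : ℝ := (p - 1) * lam0 + ∑ j, (-1 : ℝ) * m j with hC0
    have hval : ∀ t : ℝ, f (p - 1 - t, fun _ => (-1 : ℝ)) = C0 + t * c := by
      intro t
      rw [hdec]
      simp only [hC0, hc]; ring
    have hmemB : ∀ t : ℝ, 0 ≤ t →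
        ((p - 1 - t, fun _ => (-1 : ℝ)) : ℝ × (Fin K → ℝ)) ∈ B := by
      intro t ht
      rw [memB]
      exact ⟨by show p - 1 - t < p; linarith, fun j => by show (-1:ℝ) < 0; norm_num⟩
    set t : ℝ := max 0 ((u - C0) / c) with htd
    have ht0 : 0 ≤ t := le_max_left _ _
    have h1 : (u - C0) / c ≤ t := le_max_right _ _
    have h2 : u - C0 ≤ t * c := by
      calc u - C0 = ((u - C0) / c) * c := (div_mul_cancel₀ _ hcpos.ne').symm
        _ ≤ t * c := mul_le_mul_of_nonneg_right h1 hcpos.le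
    have h3 := hfB _ (hmemB t ht0)
    rw [hval t] at h3
    linarith
  -- upper bound for u
  have hup : lam0 * p ≤ u := by
    by_contra hlt
    push_neg at hlt
    set M : ℝ := lam0 + ∑ j, m j with hM
    have hM0 : 0 ≤ M := add_nonneg hlam0 (Finset.sum_nonneg fun j _ => hm j)
    set d : ℝ := lam0 * p - u with hd
    have hdpos : 0 < d := by simp only [hd]; linarith
    set ε : ℝ := d / (M + 1) with hε
    have hεpos : 0 < ε := div_pos hdpos (by linarith)
    have hmemB : ((p - ε, fun _ => -ε) : ℝ × (Fin K → ℝ)) ∈ B := by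
      rw [memB]
      exact ⟨by show p - ε < p; linarith, fun j => by show -ε < 0; linarith⟩
    have hval : f (p - ε, fun _ => -ε) = lam0 * p - ε * M := by
      rw [hdec]
      show (p - ε) * lam0 + ∑ x : Fin K, -ε * m x = _
      rw [← Finset.mul_sum]
      simp only [hM]
      ring
    have h3 := hfB _ hmemB
    rw [hval] at h3
    have h4 : ε * M < d := by
      rw [hε]
      rw [div_mul_eq_mul_div, div_lt_iff₀ (by linarith : (0:ℝ) < M + 1)]
      nlinarith
    linarith
  -- lower bound from A
  have hAge : ∀ x, Dm x → u ≤ tr x * lam0 + ∑ k, g x k * m k := by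
    intro x hDx
    have hmem : ((tr x, fun k => g x k) : ℝ × (Fin K → ℝ)) ∈ A :=
      ⟨x, hDx, le_rfl, fun k => le_rfl⟩
    have := hfA _ hmem
    rwa [hdec] at this
  -- strict positivity of lam0 using the Slater point
  have hlam0pos : 0 < lam0 := by
    rcases eq_or_lt_of_le hlam0 with h0 | h0
    · exfalso
      have h1 := hAge xS hxS
      rw [← h0] at h1
      simp only [mul_zero, zero_add] at h1
      have h2 : ∑ k, g xS k * m k ≤ 0 :=
        Finset.sum_nonpos fun k _ => mul_nonpos_of_nonpos_of_nonneg (hgS k).le (hm k)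
      have h3 : (0:ℝ) ≤ u := by rw [← h0] at hup; linarith
      have h4 : ∑ k, g xS k * m k = 0 := le_antisymm h2 (h3.trans h1)
      have h5 : ∀ k ∈ univ, g xS k * m k = 0 :=
        (Finset.sum_eq_zero_iff_of_nonpos fun k _ =>
          mul_nonpos_of_nonpos_of_nonneg (hgS k).le (hm k)).mp h4
      have h6 : ∀ k, m k = 0 := by
        intro k
        rcases mul_eq_zero.mp (h5 k (Finset.mem_univ k)) with hg | hmk
        · exact absurd hg (hgS k).ne
        · exact hmk
      have h7 : f (p - 1, fun _ => (-1 : ℝ)) = 0 := by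
        rw [hdec, ← h0]
        simp [h6]
      have h8 : ((p - 1, fun _ => (-1 : ℝ)) : ℝ × (Fin K → ℝ)) ∈ B := by
        rw [memB]
        exact ⟨by show p - 1 < p; linarith, fun j => by show (-1:ℝ) < 0; norm_num⟩
      have h9 := hfB _ h8
      rw [h7] at h9
      have hu0 : u = 0 := le_antisymm (h1.trans h2) h3
      rw [hu0] at h9
      exact lt_irrefl _ h9
    · exact h0
  -- conclusion
  refine ⟨fun k => m k / lam0, fun k => div_nonneg (hm k) hlam0pos.le, ?_⟩
  intro x hDx
  have h1 := hAge x hDx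
  have h2 : lam0 * p ≤ lam0 * (tr x + ∑ k, (m k / lam0) * g x k) := by
    have e1 : lam0 * (tr x + ∑ k, (m k / lam0) * g x k)
        = lam0 * tr x + ∑ k, g x k * m k := by
      rw [mul_add, Finset.mul_sum]
      congr 1
      refine Finset.sum_congr rfl fun k _ => ?_
      field_simp
    rw [e1]
    have : tr x * lam0 = lam0 * tr x := mul_comm _ _
    linarith
  exact le_of_mul_le_mul_left h2 hlam0pos

end JBPS
namespace JBPS

theorem first_order {K : ℕ} (c : ℝ) (Q E q w lam dd ez : Fin K → ℝ)
    (hQ : ∀ j, 0 < Q j) (hE : ∀ j, 0 < E j)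
    (key : ∀ᶠ t in nhdsWithin (0:ℝ) (Set.Ioi 0), 0 ≤ t * c +
      ∑ j, lam j * (dd j * (1 / (Q j + t * q j) - 1 / Q j) +
        ez j * (1 / (E j + t * w j) - 1 / E j))) :
    0 ≤ c - ∑ j, lam j * (dd j * q j / (Q j) ^ 2 + ez j * w j / (E j) ^ 2) := by
  set G : ℝ → ℝ := fun t => c - ∑ j, lam j *
    (dd j * q j / (Q j * (Q j + t * q j)) + ez j * w j / (E j * (E j + t * w j))) with hG
  have hQt : ∀ j, ∀ᶠ t in nhdsWithin (0:ℝ) (Set.Ioi 0), 0 < Q j + t * q j := by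
    intro j
    have hcont : Filter.Tendsto (fun t : ℝ => Q j + t * q j) (nhds 0) (nhds (Q j)) := by
      have : Continuous fun t : ℝ => Q j + t * q j := by continuity
      simpa using this.tendsto 0
    exact (hcont.eventually (eventually_gt_nhds (hQ j))).filter_mono nhdsWithin_le_nhds
  have hEt : ∀ j, ∀ᶠ t in nhdsWithin (0:ℝ) (Set.Ioi 0), 0 < E j + t * w j := by
    intro j
    have hcont : Filter.Tendsto (fun t : ℝ => E j + t * w j) (nhds 0) (nhds (E j)) := by
      have : Continuous fun t : ℝ => E j + t * w j := by continuity
      simpa using this.tendsto 0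
    exact (hcont.eventually (eventually_gt_nhds (hE j))).filter_mono nhdsWithin_le_nhds
  have hGnn : ∀ᶠ t in nhdsWithin (0:ℝ) (Set.Ioi 0), 0 ≤ G t := by
    filter_upwards [key, Filter.eventually_all.2 hQt, Filter.eventually_all.2 hEt,
      self_mem_nhdsWithin] with t hkey hQ' hE' ht
    have ht0 : (0:ℝ) < t := ht
    have hid : ∑ j, lam j * (dd j * (1 / (Q j + t * q j) - 1 / Q j) +
        ez j * (1 / (E j + t * w j) - 1 / E j))
        = -t * ∑ j, lam j * (dd j * q j / (Q j * (Q j + t * q j)) +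
            ez j * w j / (E j * (E j + t * w j))) := by
      rw [Finset.mul_sum]
      refine Finset.sum_congr rfl fun j _ => ?_
      have h1 : (Q j) ≠ 0 := (hQ j).ne'
      have h2 : (Q j + t * q j) ≠ 0 := (hQ' j).ne'
      have h3 : (E j) ≠ 0 := (hE j).ne'
      have h4 : (E j + t * w j) ≠ 0 := (hE' j).ne'
      field_simp
      ring
    rw [hid] at hkey
    have : 0 ≤ t * G t := by
      rw [hG]
      simp only []
      nlinarith [hkey]
    by_contra hneg
    push_neg at hneg
    nlinarith [mul_pos ht0 (neg_pos.mpr hneg), this]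
  have hlim : Filter.Tendsto G (nhdsWithin (0:ℝ) (Set.Ioi 0))
      (nhds (c - ∑ j, lam j * (dd j * q j / (Q j * Q j) + ez j * w j / (E j * E j)))) := by
    have hsum : Filter.Tendsto
        (fun t => ∑ j, lam j * (dd j * q j / (Q j * (Q j + t * q j)) +
          ez j * w j / (E j * (E j + t * w j)))) (nhdsWithin (0:ℝ) (Set.Ioi 0))
        (nhds (∑ j, lam j * (dd j * q j / (Q j * Q j) + ez j * w j / (E j * E j)))) := by
      refine tendsto_finset_sum _ fun j _ => ?_
      have hden1 : Filter.Tendsto (fun t : ℝ => Q j * (Q j + t * q j))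
          (nhdsWithin (0:ℝ) (Set.Ioi 0)) (nhds (Q j * Q j)) := by
        have : Continuous fun t : ℝ => Q j * (Q j + t * q j) := by continuity
        have := this.tendsto 0
        simp only [zero_mul, add_zero] at this
        exact this.mono_left nhdsWithin_le_nhds
      have hden2 : Filter.Tendsto (fun t : ℝ => E j * (E j + t * w j))
          (nhdsWithin (0:ℝ) (Set.Ioi 0)) (nhds (E j * E j)) := by
        have : Continuous fun t : ℝ => E j * (E j + t * w j) := by continuity
        have := this.tendsto 0
        simp only [zero_mul, add_zero] at this
        exact this.mono_left nhdsWithin_le_nhds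
      have t1 : Filter.Tendsto (fun t : ℝ => dd j * q j / (Q j * (Q j + t * q j)))
          (nhdsWithin (0:ℝ) (Set.Ioi 0)) (nhds (dd j * q j / (Q j * Q j))) :=
        Filter.Tendsto.div tendsto_const_nhds hden1 (mul_pos (hQ j) (hQ j)).ne'
      have t2 : Filter.Tendsto (fun t : ℝ => ez j * w j / (E j * (E j + t * w j)))
          (nhdsWithin (0:ℝ) (Set.Ioi 0)) (nhds (ez j * w j / (E j * E j))) :=
        Filter.Tendsto.div tendsto_const_nhds hden2 (mul_pos (hE j) (hE j)).ne'
      exact (t1.add t2).const_mul _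
    exact (tendsto_const_nhds.sub hsum)
  have := ge_of_tendsto hlim hGnn
  calc (0:ℝ) ≤ c - ∑ j, lam j * (dd j * q j / (Q j * Q j) + ez j * w j / (E j * E j)) := this
    _ = c - ∑ j, lam j * (dd j * q j / (Q j) ^ 2 + ez j * w j / (E j) ^ 2) := by
        refine congrArg _ (Finset.sum_congr rfl fun j _ => ?_)
        rw [sq, sq]

end JBPS
namespace JBPS

variable {K Nt : ℕ}

lemma Ev_update (σ2 : Fin K → ℝ) (h : Fin K → Fin Nt → ℂ)
    (X : Fin K → Matrix (Fin Nt) (Fin Nt) ℂ) (k : Fin K) (t : ℝ)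
    (H : Matrix (Fin Nt) (Fin Nt) ℂ) (j : Fin K) :
    Ev σ2 h (Function.update X k (X k + (t : ℂ) • H)) j
      = Ev σ2 h X j + t * quadForm (h j) H := by
  unfold Ev
  have e0 : (fun j' => quadForm (h j) (Function.update X k (X k + (t : ℂ) • H) j'))
      = Function.update (fun j' => quadForm (h j) (X j')) k
          (quadForm (h j) (X k + (t : ℂ) • H)) := by
    funext j'
    by_cases hj' : j' = k
    · subst hj'; rw [Function.update_self, Function.update_self]
    · rw [Function.update_of_ne hj', Function.update_of_ne hj']
  rw [e0, Finset.sum_update_of_mem (Finset.mem_univ k), ← Finset.erase_eq,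
    ← Finset.add_sum_erase univ _ (Finset.mem_univ k),
    quadForm_add, quadForm_smul]
  ring

lemma Qv_update (γ σ2 : Fin K → ℝ) (h : Fin K → Fin Nt → ℂ)
    (X : Fin K → Matrix (Fin Nt) (Fin Nt) ℂ) (k : Fin K) (t : ℝ)
    (H : Matrix (Fin Nt) (Fin Nt) ℂ) (j : Fin K) :
    Qv γ σ2 h (Function.update X k (X k + (t : ℂ) • H)) j
      = Qv γ σ2 h X j
        + t * (if j = k then 1 / γ j * quadForm (h j) H else -quadForm (h j) H) := by
  unfold Qv
  by_cases hj : j = k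
  · subst hj
    rw [if_pos rfl, Function.update_self, quadForm_add, quadForm_smul]
    have e1 : ∑ j' ∈ univ.erase j, quadForm (h j) (Function.update X j (X j + (t : ℂ) • H) j')
        = ∑ j' ∈ univ.erase j, quadForm (h j) (X j') := by
      refine Finset.sum_congr rfl fun j' hj' => ?_
      rw [Function.update_of_ne (Finset.mem_erase.mp hj').1]
    rw [e1]; ring
  · rw [if_neg hj, Function.update_of_ne hj]
    have hkmem : k ∈ univ.erase j := Finset.mem_erase.mpr ⟨fun hc => hj hc.symm, Finset.mem_univ k⟩
    have e0 : (fun j' => quadForm (h j) (Function.update X k (X k + (t : ℂ) • H) j'))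
        = Function.update (fun j' => quadForm (h j) (X j')) k
            (quadForm (h j) (X k + (t : ℂ) • H)) := by
      funext j'
      by_cases hj' : j' = k
      · subst hj'; rw [Function.update_self, Function.update_self]
      · rw [Function.update_of_ne hj', Function.update_of_ne hj']
    rw [e0, Finset.sum_update_of_mem hkmem, ← Finset.erase_eq,
      ← Finset.add_sum_erase (univ.erase j) _ hkmem,
      quadForm_add, quadForm_smul]
    ring

lemma trRe_update (X : Fin K → Matrix (Fin Nt) (Fin Nt) ℂ) (k : Fin K) (t : ℝ)
    (H : Matrix (Fin Nt) (Fin Nt) ℂ) :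
    trRe (Function.update X k (X k + (t : ℂ) • H)) = trRe X + t * (H.trace).re := by
  unfold trRe
  have e0 : (fun k' => (Function.update X k (X k + (t : ℂ) • H) k').trace)
      = Function.update (fun k' => (X k').trace) k ((X k + (t : ℂ) • H).trace) := by
    funext k'
    by_cases hk' : k' = k
    · subst hk'; rw [Function.update_self, Function.update_self]
    · rw [Function.update_of_ne hk', Function.update_of_ne hk']
  rw [e0, Finset.sum_update_of_mem (Finset.mem_univ k)]
  rw [show (∑ k', (X k').trace) = (X k).trace + ∑ k' ∈ univ.erase k, (X k').trace from
    (Finset.add_sum_erase univ _ (Finset.mem_univ k)).symm]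
  rw [trace_add, trace_smul]
  simp [Complex.add_re, Complex.re_ofReal_mul]
  ring

theorem direction_ineq (h : Fin K → Fin Nt → ℂ) (σ2 δ2 ζ γ e : Fin K → ℝ)
    (hζ : ∀ j, 0 < ζ j) (X : Fin K → Matrix (Fin Nt) (Fin Nt) ℂ) (lam : Fin K → ℝ)
    (hD : Dom γ σ2 h X)
    (hmin : ∀ X', Dom γ σ2 h X' →
      trRe X + ∑ j, lam j * gfun γ σ2 δ2 ζ e h X j ≤
      trRe X' + ∑ j, lam j * gfun γ σ2 δ2 ζ e h X' j)
    (k : Fin K) (H : Matrix (Fin Nt) (Fin Nt) ℂ)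
    (hH : ∀ᶠ t : ℝ in nhdsWithin (0:ℝ) (Set.Ioi 0), (X k + (t : ℂ) • H).PosSemidef) :
    0 ≤ (H.trace).re - ∑ j, lam j *
      (δ2 j * (if j = k then 1 / γ j * quadForm (h j) H else -quadForm (h j) H)
          / (Qv γ σ2 h X j) ^ 2
        + (e j / ζ j) * quadForm (h j) H / (Ev σ2 h X j) ^ 2) := by
  have hQpos := hD.2.1
  have hEpos := hD.2.2
  have h0 := first_order ((H.trace).re) (Qv γ σ2 h X) (Ev σ2 h X)
    (fun j => if j = k then 1 / γ j * quadForm (h j) H else -quadForm (h j) H)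
    (fun j => quadForm (h j) H) lam δ2 (fun j => e j / ζ j) hQpos hEpos ?_
  · exact h0
  -- the eventual inequality
  have hQt : ∀ j, ∀ᶠ t in nhdsWithin (0:ℝ) (Set.Ioi 0),
      0 < Qv γ σ2 h X j + t * (if j = k then 1 / γ j * quadForm (h j) H
        else -quadForm (h j) H) := by
    intro j
    have hcont : Filter.Tendsto (fun t : ℝ => Qv γ σ2 h X j + t *
        (if j = k then 1 / γ j * quadForm (h j) H else -quadForm (h j) H))
        (nhds 0) (nhds (Qv γ σ2 h X j)) := by
      have : Continuous fun t : ℝ => Qv γ σ2 h X j + t *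
          (if j = k then 1 / γ j * quadForm (h j) H else -quadForm (h j) H) :=
        continuous_const.add (continuous_id.mul continuous_const)
      simpa only [zero_mul, add_zero] using this.tendsto 0
    exact (hcont.eventually (eventually_gt_nhds (hQpos j))).filter_mono nhdsWithin_le_nhds
  have hEt : ∀ j, ∀ᶠ t in nhdsWithin (0:ℝ) (Set.Ioi 0),
      0 < Ev σ2 h X j + t * quadForm (h j) H := by
    intro j
    have hcont : Filter.Tendsto (fun t : ℝ => Ev σ2 h X j + t * quadForm (h j) H)
        (nhds 0) (nhds (Ev σ2 h X j)) := by
      have : Continuous fun t : ℝ => Ev σ2 h X j + t * quadForm (h j) H :=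
        continuous_const.add (continuous_id.mul continuous_const)
      simpa only [zero_mul, add_zero] using this.tendsto 0
    exact (hcont.eventually (eventually_gt_nhds (hEpos j))).filter_mono nhdsWithin_le_nhds
  filter_upwards [hH, Filter.eventually_all.2 hQt, Filter.eventually_all.2 hEt,
    self_mem_nhdsWithin] with t hPSD hQ' hE' ht
  have ht0 : (0:ℝ) < t := ht
  set Xt := Function.update X k (X k + (t : ℂ) • H) with hXt
  have hDom' : Dom γ σ2 h Xt := by
    refine ⟨fun j => ?_, fun j => ?_, fun j => ?_⟩
    · by_cases hj : j = k
      · subst hj; rw [hXt, Function.update_self]; exact hPSD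
      · rw [hXt, Function.update_of_ne hj]; exact hD.1 j
    · rw [hXt, Qv_update]; exact hQ' j
    · rw [hXt, Ev_update]; exact hE' j
  have hm := hmin Xt hDom'
  have e1 : trRe Xt = trRe X + t * (H.trace).re := trRe_update X k t H
  have e2 : ∀ j, gfun γ σ2 δ2 ζ e h Xt j = gfun γ σ2 δ2 ζ e h X j
      + (δ2 j * (1 / (Qv γ σ2 h X j + t * (if j = k then 1 / γ j * quadForm (h j) H
            else -quadForm (h j) H)) - 1 / Qv γ σ2 h X j)
        + (e j / ζ j) * (1 / (Ev σ2 h X j + t * quadForm (h j) H) - 1 / Ev σ2 h X j)) := by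
    intro j
    unfold gfun
    rw [hXt, Qv_update, Ev_update]
    have n1 : Qv γ σ2 h X j ≠ 0 := (hQpos j).ne'
    have n2 : Qv γ σ2 h X j + t * (if j = k then 1 / γ j * quadForm (h j) H
        else -quadForm (h j) H) ≠ 0 := (hQ' j).ne'
    have n3 : Ev σ2 h X j ≠ 0 := (hEpos j).ne'
    have n4 : Ev σ2 h X j + t * quadForm (h j) H ≠ 0 := (hE' j).ne'
    have n5 : ζ j ≠ 0 := (hζ j).ne'
    field_simp
    ring
  have e3 : ∑ j, lam j * gfun γ σ2 δ2 ζ e h Xt j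
      = ∑ j, lam j * gfun γ σ2 δ2 ζ e h X j
        + ∑ j, lam j * (δ2 j * (1 / (Qv γ σ2 h X j + t *
            (if j = k then 1 / γ j * quadForm (h j) H else -quadForm (h j) H))
              - 1 / Qv γ σ2 h X j)
          + (e j / ζ j) * (1 / (Ev σ2 h X j + t * quadForm (h j) H) - 1 / Ev σ2 h X j)) := by
    rw [← Finset.sum_add_distrib]
    exact Finset.sum_congr rfl fun j _ => by rw [e2 j]; ring
  rw [e1, e3] at hm
  linarith

end JBPS
namespace JBPS

variable {K Nt : ℕ}

lemma sum_mulVec' {ι : Type*} (s : Finset ι) (A : ι → Matrix (Fin Nt) (Fin Nt) ℂ)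
    (v : Fin Nt → ℂ) : (∑ j ∈ s, A j) *ᵥ v = ∑ j ∈ s, A j *ᵥ v := by
  ext i
  simp only [Matrix.mulVec, dotProduct, Finset.sum_apply, Matrix.sum_apply, Finset.sum_mul]
  exact Finset.sum_comm

lemma dotProduct_sum' {ι : Type*} (s : Finset ι) (v : Fin Nt → ℂ) (w : ι → (Fin Nt → ℂ)) :
    v ⬝ᵥ (∑ j ∈ s, w j) = ∑ j ∈ s, v ⬝ᵥ w j := by
  simp only [dotProduct, Finset.sum_apply, Finset.mul_sum]
  rw [Finset.sum_comm]

lemma mix_props (γ σ2 δ2 ζ e : Fin K → ℝ) (h : Fin K → Fin Nt → ℂ)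
    (hδ : ∀ k, 0 < δ2 k) (hζpos : ∀ k, 0 < ζ k) (he : ∀ k, 0 < e k)
    (a b : ℝ) (Y Z : Fin K → Matrix (Fin Nt) (Fin Nt) ℂ)
    (ha : 0 ≤ a) (hb : 0 ≤ b) (hab : a + b = 1)
    (hDY : Dom γ σ2 h Y) (hDZ : Dom γ σ2 h Z) :
    Dom γ σ2 h (fun k => (a : ℂ) • Y k + (b : ℂ) • Z k) ∧
    trRe (fun k => (a : ℂ) • Y k + (b : ℂ) • Z k) ≤ a * trRe Y + b * trRe Z ∧
    ∀ k, gfun γ σ2 δ2 ζ e h (fun k => (a : ℂ) • Y k + (b : ℂ) • Z k) k ≤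
      a * gfun γ σ2 δ2 ζ e h Y k + b * gfun γ σ2 δ2 ζ e h Z k := by
  have eqf : ∀ k' j, quadForm (h k') ((fun k => (a : ℂ) • Y k + (b : ℂ) • Z k) j)
      = a * quadForm (h k') (Y j) + b * quadForm (h k') (Z j) := by
    intro k' j
    show quadForm (h k') ((a : ℂ) • Y j + (b : ℂ) • Z j) = _
    rw [quadForm_add, quadForm_smul, quadForm_smul]
  have QW : ∀ k, Qv γ σ2 h (fun k => (a : ℂ) • Y k + (b : ℂ) • Z k) k
      = a * Qv γ σ2 h Y k + b * Qv γ σ2 h Z k := by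
    intro k
    unfold Qv
    rw [eqf k k, Finset.sum_congr rfl fun j _ => eqf k j, Finset.sum_add_distrib]
    rw [show ∑ j ∈ univ.erase k, a * quadForm (h k) (Y j)
        = a * ∑ j ∈ univ.erase k, quadForm (h k) (Y j) from (Finset.mul_sum _ _ _).symm]
    rw [show ∑ j ∈ univ.erase k, b * quadForm (h k) (Z j)
        = b * ∑ j ∈ univ.erase k, quadForm (h k) (Z j) from (Finset.mul_sum _ _ _).symm]
    have hb' : b = 1 - a := by linarith
    subst hb'
    ring
  have EW : ∀ k, Ev σ2 h (fun k => (a : ℂ) • Y k + (b : ℂ) • Z k) k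
      = a * Ev σ2 h Y k + b * Ev σ2 h Z k := by
    intro k
    unfold Ev
    rw [Finset.sum_congr rfl fun j _ => eqf k j, Finset.sum_add_distrib]
    rw [show ∑ j, a * quadForm (h k) (Y j) = a * ∑ j, quadForm (h k) (Y j) from
      (Finset.mul_sum _ _ _).symm]
    rw [show ∑ j, b * quadForm (h k) (Z j) = b * ∑ j, quadForm (h k) (Z j) from
      (Finset.mul_sum _ _ _).symm]
    have hb' : b = 1 - a := by linarith
    subst hb'
    ring
  have hDW : Dom γ σ2 h (fun k => (a : ℂ) • Y k + (b : ℂ) • Z k) := by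
    refine ⟨fun k => (psd_smul (hDY.1 k) ha).add (psd_smul (hDZ.1 k) hb), fun k => ?_, fun k => ?_⟩
    · rw [QW k]; exact comb_pos ha hb hab (hDY.2.1 k) (hDZ.2.1 k)
    · rw [EW k]; exact comb_pos ha hb hab (hDY.2.2 k) (hDZ.2.2 k)
  refine ⟨hDW, ?_, ?_⟩
  · -- trace
    have e1 : trRe (fun k => (a : ℂ) • Y k + (b : ℂ) • Z k) = a * trRe Y + b * trRe Z := by
      unfold trRe
      have e2 : ∑ k, ((a : ℂ) • Y k + (b : ℂ) • Z k).trace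
          = (a : ℂ) * (∑ k, (Y k).trace) + (b : ℂ) * (∑ k, (Z k).trace) := by
        rw [Finset.mul_sum, Finset.mul_sum, ← Finset.sum_add_distrib]
        refine Finset.sum_congr rfl fun k _ => ?_
        rw [trace_add, trace_smul, trace_smul, smul_eq_mul, smul_eq_mul]
      rw [e2]
      simp [Complex.add_re, Complex.re_ofReal_mul]
    rw [e1]
  · -- g convexity
    intro k
    have h1 : δ2 k / (a * Qv γ σ2 h Y k + b * Qv γ σ2 h Z k)
        ≤ a * (δ2 k / Qv γ σ2 h Y k) + b * (δ2 k / Qv γ σ2 h Z k) :=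
      div_comb ha hb hab (hDY.2.1 k) (hDZ.2.1 k) (hδ k).le
    have h2 : ζ k * (a * Ev σ2 h Y k + b * Ev σ2 h Z k)
        = a * (ζ k * Ev σ2 h Y k) + b * (ζ k * Ev σ2 h Z k) := by ring
    have h3 : e k / (a * (ζ k * Ev σ2 h Y k) + b * (ζ k * Ev σ2 h Z k))
        ≤ a * (e k / (ζ k * Ev σ2 h Y k)) + b * (e k / (ζ k * Ev σ2 h Z k)) :=
      div_comb ha hb hab (mul_pos (hζpos k) (hDY.2.2 k)) (mul_pos (hζpos k) (hDZ.2.2 k))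
        (he k).le
    have expand : a * gfun γ σ2 δ2 ζ e h Y k + b * gfun γ σ2 δ2 ζ e h Z k
        = (a * (δ2 k / Qv γ σ2 h Y k) + b * (δ2 k / Qv γ σ2 h Z k))
          + (a * (e k / (ζ k * Ev σ2 h Y k)) + b * (e k / (ζ k * Ev σ2 h Z k))) - (a + b) := by
      unfold gfun; ring
    rw [expand, hab]
    unfold gfun
    rw [QW k, EW k, h2]
    linarith

end JBPS

namespace JBPS

variable {K Nt : ℕ}

lemma star_dot_self (v : Fin Nt → ℂ) :
    star v ⬝ᵥ v = ((∑ i, Complex.normSq (v i) : ℝ) : ℂ) := by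
  push_cast
  simp only [dotProduct, Pi.star_apply]
  refine Finset.sum_congr rfl fun i _ => ?_
  rw [Complex.star_def, mul_comm, Complex.mul_conj]

end JBPS
theorem sdr_optimal_is_rank_one (K Nt : ℕ) (hK : 1 ≤ K) (hNt : 1 ≤ Nt)
    (h : Fin K → (Fin Nt → ℂ)) (σ2 δ2 ζ γ e : Fin K → ℝ)
    (hσ : ∀ k, 0 < σ2 k) (hδ : ∀ k, 0 < δ2 k)
    (hζ : ∀ k, 0 < ζ k ∧ ζ k ≤ 1) (hγ : ∀ k, 0 < γ k) (he : ∀ k, 0 < e k)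
    (X : Fin K → Matrix (Fin Nt) (Fin Nt) ℂ) (ρ : Fin K → ℝ)
    (hfeas : SDRFeasible h σ2 δ2 ζ γ e X ρ)
    (hopt : ∀ (X' : Fin K → Matrix (Fin Nt) (Fin Nt) ℂ) (ρ' : Fin K → ℝ),
      SDRFeasible h σ2 δ2 ζ γ e X' ρ' →
      (∑ k, (X k).trace).re ≤ (∑ k, (X' k).trace).re) :
    ∀ k, (X k).rank = 1 := by
  classical
  obtain ⟨hPSD, hρ, hSINR, hENE⟩ := hfeas
  have hζpos : ∀ k, 0 < ζ k := fun k => (hζ k).1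
  -- domain facts for the optimal point
  have hQpos : ∀ k, 0 < JBPS.Qv γ σ2 h X k := by
    intro k
    have h1 := hSINR k
    have h2 : 0 < δ2 k / ρ k := div_pos (hδ k) (hρ k).1
    unfold JBPS.Qv
    linarith
  have hEpos : ∀ k, 0 < JBPS.Ev σ2 h X k := by
    intro k
    have h1 := hENE k
    have h2 : 0 < e k / (ζ k * (1 - ρ k)) :=
      div_pos (he k) (mul_pos (hζpos k) (by linarith [(hρ k).2]))
    unfold JBPS.Ev
    linarith
  have hD : JBPS.Dom γ σ2 h X := ⟨hPSD, hQpos, hEpos⟩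
  have hg : ∀ k, JBPS.gfun γ σ2 δ2 ζ e h X k ≤ 0 := by
    intro k
    have hρk := hρ k
    have hQge : δ2 k / ρ k ≤ JBPS.Qv γ σ2 h X k := by
      have := hSINR k; unfold JBPS.Qv; linarith
    have hEge : e k / (ζ k * (1 - ρ k)) ≤ JBPS.Ev σ2 h X k := by
      have := hENE k; unfold JBPS.Ev; linarith
    have h1 : δ2 k / JBPS.Qv γ σ2 h X k ≤ ρ k := by
      rw [div_le_iff₀ (hQpos k)]
      have h2 : δ2 k ≤ JBPS.Qv γ σ2 h X k * ρ k := (div_le_iff₀ hρk.1).mp hQge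
      have h3 : JBPS.Qv γ σ2 h X k * ρ k = ρ k * JBPS.Qv γ σ2 h X k := mul_comm _ _
      linarith
    have h4 : e k / (ζ k * JBPS.Ev σ2 h X k) ≤ 1 - ρ k := by
      rw [div_le_iff₀ (mul_pos (hζpos k) (hEpos k))]
      have h5 : e k ≤ JBPS.Ev σ2 h X k * (ζ k * (1 - ρ k)) :=
        (div_le_iff₀ (mul_pos (hζpos k) (by linarith [hρk.2]))).mp hEge
      have h6 : JBPS.Ev σ2 h X k * (ζ k * (1 - ρ k))
          = (1 - ρ k) * (ζ k * JBPS.Ev σ2 h X k) := by ring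
      linarith
    unfold JBPS.gfun
    linarith
  -- optimality for the reduced problem
  have hopt' : ∀ X', JBPS.Dom γ σ2 h X' → (∀ k, JBPS.gfun γ σ2 δ2 ζ e h X' k ≤ 0) →
      JBPS.trRe X ≤ JBPS.trRe X' := by
    intro X' hD' hg'
    obtain ⟨hP', hQ', hE'⟩ := hD'
    apply hopt X' (fun k => δ2 k / JBPS.Qv γ σ2 h X' k)
    refine ⟨hP', fun k => ⟨div_pos (hδ k) (hQ' k), ?_⟩, fun k => ?_, fun k => ?_⟩
    · have hgk := hg' k
      unfold JBPS.gfun at hgk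
      have : 0 < e k / (ζ k * JBPS.Ev σ2 h X' k) :=
        div_pos (he k) (mul_pos (hζpos k) (hE' k))
      linarith
    · have hc : δ2 k / (δ2 k / JBPS.Qv γ σ2 h X' k) = JBPS.Qv γ σ2 h X' k := by
        rw [div_div_eq_mul_div, mul_comm, mul_div_assoc, div_self (hδ k).ne', mul_one]
      rw [hc]
      unfold JBPS.Qv
      linarith
    · have hgk := hg' k
      unfold JBPS.gfun at hgk
      have hpos2 : 0 < e k / (ζ k * JBPS.Ev σ2 h X' k) :=
        div_pos (he k) (mul_pos (hζpos k) (hE' k))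
      have h1r : 0 < 1 - δ2 k / JBPS.Qv γ σ2 h X' k := by linarith
      have h6 : e k / (ζ k * JBPS.Ev σ2 h X' k) ≤ 1 - δ2 k / JBPS.Qv γ σ2 h X' k := by
        linarith
      have h7 : e k ≤ (1 - δ2 k / JBPS.Qv γ σ2 h X' k) * (ζ k * JBPS.Ev σ2 h X' k) :=
        (div_le_iff₀ (mul_pos (hζpos k) (hE' k))).mp h6
      have h8 : e k / (ζ k * (1 - δ2 k / JBPS.Qv γ σ2 h X' k)) ≤ JBPS.Ev σ2 h X' k := by
        rw [div_le_iff₀ (mul_pos (hζpos k) h1r)]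
        have h9 : (1 - δ2 k / JBPS.Qv γ σ2 h X' k) * (ζ k * JBPS.Ev σ2 h X' k)
            = JBPS.Ev σ2 h X' k * (ζ k * (1 - δ2 k / JBPS.Qv γ σ2 h X' k)) := by ring
        linarith
      have h9 : (∑ j, quadForm (h k) (X' j)) = JBPS.Ev σ2 h X' k - σ2 k := by
        unfold JBPS.Ev; ring
      rw [h9]
      linarith
  -- positivity of the own-signal quadratic forms
  have hS : ∀ k, 0 < quadForm (h k) (X k) := by
    intro k
    have hI : 0 ≤ ∑ j ∈ univ.erase k, quadForm (h k) (X j) :=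
      Finset.sum_nonneg fun j _ => JBPS.quadForm_nonneg (hPSD j)
    have hQk := hQpos k
    unfold JBPS.Qv at hQk
    by_contra hS0
    push_neg at hS0
    have : (1 / γ k) * quadForm (h k) (X k) ≤ 0 :=
      mul_nonpos_of_nonneg_of_nonpos (le_of_lt (one_div_pos.mpr (hγ k))) hS0
    linarith [hσ k]
  have hT : ∀ k, 0 < ∑ j, quadForm (h k) (X j) := by
    intro k
    have h1 : quadForm (h k) (X k) ≤ ∑ j, quadForm (h k) (X j) :=
      Finset.single_le_sum (f := fun j => quadForm (h k) (X j))
        (fun j _ => JBPS.quadForm_nonneg (hPSD j)) (Finset.mem_univ k)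
    linarith [hS k]
  -- the Slater point 2•X
  set XS : Fin K → Matrix (Fin Nt) (Fin Nt) ℂ := fun k => ((2 : ℝ) : ℂ) • X k with hXSdef
  have eS : ∀ (j k' : Fin K), quadForm (h k') (XS j) = 2 * quadForm (h k') (X j) := by
    intro j k'
    rw [hXSdef]
    exact JBPS.quadForm_smul _ 2 _
  have hQXS : ∀ k, JBPS.Qv γ σ2 h XS k = 2 * JBPS.Qv γ σ2 h X k + σ2 k := by
    intro k
    unfold JBPS.Qv
    rw [eS k k, Finset.sum_congr rfl fun j _ => eS j k]
    rw [show ∑ j ∈ univ.erase k, 2 * quadForm (h k) (X j)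
        = 2 * ∑ j ∈ univ.erase k, quadForm (h k) (X j) from (Finset.mul_sum _ _ _).symm]
    ring
  have hEXS : ∀ k, JBPS.Ev σ2 h XS k = 2 * (∑ j, quadForm (h k) (X j)) + σ2 k := by
    intro k
    unfold JBPS.Ev
    rw [Finset.sum_congr rfl fun j _ => eS j k]
    rw [show ∑ j, 2 * quadForm (h k) (X j)
        = 2 * ∑ j, quadForm (h k) (X j) from (Finset.mul_sum _ _ _).symm]
  have hDXS : JBPS.Dom γ σ2 h XS := by
    refine ⟨fun k => ?_, fun k => ?_, fun k => ?_⟩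
    · rw [hXSdef]; exact JBPS.psd_smul (hPSD k) (by norm_num)
    · rw [hQXS k]; linarith [hQpos k, hσ k]
    · rw [hEXS k]; linarith [hT k, hσ k]
  have hgXS : ∀ k, JBPS.gfun γ σ2 δ2 ζ e h XS k < 0 := by
    intro k
    unfold JBPS.gfun
    rw [hQXS k, hEXS k]
    have h1 : δ2 k / (2 * JBPS.Qv γ σ2 h X k + σ2 k) < δ2 k / JBPS.Qv γ σ2 h X k :=
      div_lt_div_of_pos_left (hδ k) (hQpos k) (by linarith [hQpos k, hσ k])
    have h2 : e k / (ζ k * (2 * (∑ j, quadForm (h k) (X j)) + σ2 k))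
        < e k / (ζ k * ((∑ j, quadForm (h k) (X j)) + σ2 k)) :=
      div_lt_div_of_pos_left (he k) (mul_pos (hζpos k) (by linarith [hT k, hσ k]))
        (by have := mul_lt_mul_of_pos_left
              (show (∑ j, quadForm (h k) (X j)) + σ2 k
                  < 2 * (∑ j, quadForm (h k) (X j)) + σ2 k by linarith [hT k]) (hζpos k)
            exact this)
    have h3 := hg k
    unfold JBPS.gfun JBPS.Ev at h3
    linarith
  -- KKT multipliers
  obtain ⟨lam, hlam, hmaster⟩ := JBPS.abstract_kkt (JBPS.Dom γ σ2 h) JBPS.trRe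
    (JBPS.gfun γ σ2 δ2 ζ e h)
    (fun a b Y Z => fun k => (a : ℂ) • Y k + (b : ℂ) • Z k)
    (fun a b Y Z ha hb hab hDY hDZ =>
      JBPS.mix_props γ σ2 δ2 ζ e h hδ hζpos he a b Y Z ha hb hab hDY hDZ)
    X hD hg XS hDXS hgXS hopt'
  have hmin : ∀ X', JBPS.Dom γ σ2 h X' →
      JBPS.trRe X + ∑ j, lam j * JBPS.gfun γ σ2 δ2 ζ e h X j ≤
      JBPS.trRe X' + ∑ j, lam j * JBPS.gfun γ σ2 δ2 ζ e h X' j := by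
    intro X' hD'
    have h1 := hmaster X' hD'
    have h2 : ∑ j, lam j * JBPS.gfun γ σ2 δ2 ζ e h X j ≤ 0 :=
      Finset.sum_nonpos fun j _ => mul_nonpos_of_nonneg_of_nonpos (hlam j) (hg j)
    linarith
    -- ===== rank-one argument =====
  intro k
  set QQ : Fin K → ℝ := JBPS.Qv γ σ2 h X with hQQ
  set EE : Fin K → ℝ := JBPS.Ev σ2 h X with hEE
  set coef : Fin K → Fin K → ℝ := fun k' j =>
    (if j = k' then -(lam j * δ2 j * (1 / γ j)) else lam j * δ2 j) / QQ j ^ 2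
      - lam j * (e j / ζ j) / EE j ^ 2 with hcoef
  -- rewrite helper for the direction inequality sums
  have e6 : ∀ (k' : Fin K) (r : Fin K → ℝ),
      (∑ j, lam j * (δ2 j * (if j = k' then 1 / γ j * r j else -r j) / QQ j ^ 2
        + e j / ζ j * r j / EE j ^ 2)) = -∑ j, coef k' j * r j := by
    intro k' r
    rw [← Finset.sum_neg_distrib]
    refine Finset.sum_congr rfl fun j _ => ?_
    simp only [hcoef]
    by_cases hj : j = k'
    · rw [if_pos hj, if_pos hj]; ring
    · rw [if_neg hj, if_neg hj]; ring
  -- the quadratic-form inequality for every direction vv^H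
  have ineq1 : ∀ (k' : Fin K) (v : Fin Nt → ℂ),
      0 ≤ (∑ i, Complex.normSq (v i)) + ∑ j, coef k' j * Complex.normSq (star (h j) ⬝ᵥ v) := by
    intro k' v
    have hH : ∀ᶠ t : ℝ in nhdsWithin (0:ℝ) (Set.Ioi 0),
        (X k' + (t : ℂ) • vecMulVec v (star v)).PosSemidef := by
      filter_upwards [self_mem_nhdsWithin] with t ht
      exact (hPSD k').add (JBPS.psd_smul (JBPS.psd_vecMulVec v) (le_of_lt ht))
    have h1 := JBPS.direction_ineq h σ2 δ2 ζ γ e hζpos X lam hD hmin k'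
      (vecMulVec v (star v)) hH
    have htr : ((vecMulVec v (star v)).trace).re = ∑ i, Complex.normSq (v i) := by
      unfold Matrix.trace
      rw [Complex.re_sum]
      refine Finset.sum_congr rfl fun i _ => ?_
      simp only [Matrix.diag_apply, vecMulVec_apply, Pi.star_apply]
      rw [Complex.star_def, Complex.mul_conj, Complex.ofReal_re]
    simp only [JBPS.quadForm_vecMulVec] at h1
    rw [htr, e6 k' (fun j => Complex.normSq (star (h j) ⬝ᵥ v)), sub_neg_eq_add] at h1
    exact h1
  -- the trace identity from the ±X k directions
  have hq1 : ∀ᶠ t : ℝ in nhdsWithin (0:ℝ) (Set.Ioi 0), (X k + (t : ℂ) • (X k)).PosSemidef := by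
    filter_upwards [self_mem_nhdsWithin] with t ht
    exact (hPSD k).add (JBPS.psd_smul (hPSD k) (le_of_lt ht))
  have hq2 : ∀ᶠ t : ℝ in nhdsWithin (0:ℝ) (Set.Ioi 0),
      (X k + (t : ℂ) • (-(X k))).PosSemidef := by
    have hev : ∀ᶠ t : ℝ in nhdsWithin (0:ℝ) (Set.Ioi 0), t < 1 :=
      ((eventually_lt_nhds (by norm_num : (0:ℝ) < 1)).filter_mono nhdsWithin_le_nhds)
    filter_upwards [hev] with t ht1
    have heq : X k + (t : ℂ) • (-(X k)) = (((1 - t : ℝ)) : ℂ) • X k := by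
      push_cast
      rw [smul_neg, ← sub_eq_add_neg, sub_smul, one_smul]
    rw [heq]
    exact JBPS.psd_smul (hPSD k) (by linarith)
  have h2 := JBPS.direction_ineq h σ2 δ2 ζ γ e hζpos X lam hD hmin k (X k) hq1
  have h3 := JBPS.direction_ineq h σ2 δ2 ζ γ e hζpos X lam hD hmin k (-(X k)) hq2
  rw [e6 k (fun j => quadForm (h j) (X k)), sub_neg_eq_add] at h2
  simp only [JBPS.quadForm_neg, Matrix.trace_neg, Complex.neg_re] at h3
  have e8 : (∑ j, lam j * (δ2 j * (if j = k then 1 / γ j * -quadForm (h j) (X k)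
        else - -quadForm (h j) (X k)) / QQ j ^ 2
      + e j / ζ j * -quadForm (h j) (X k) / EE j ^ 2))
      = ∑ j, coef k j * quadForm (h j) (X k) := by
    refine Finset.sum_congr rfl fun j _ => ?_
    simp only [hcoef]
    by_cases hj : j = k
    · rw [if_pos hj, if_pos hj]; ring
    · rw [if_neg hj, if_neg hj]; ring
  rw [e8] at h3
  have W0 : (X k).trace.re + ∑ j, coef k j * quadForm (h j) (X k) = 0 := by
    linarith
  -- the dual certificate matrix
  set Z : Matrix (Fin Nt) (Fin Nt) ℂ :=
    1 + ∑ j, ((coef k j : ℝ) : ℂ) • vecMulVec (h j) (star (h j)) with hZdef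
  have zform : ∀ v : Fin Nt → ℂ, star v ⬝ᵥ Z *ᵥ v
      = (((∑ i, Complex.normSq (v i))
          + ∑ j, coef k j * Complex.normSq (star (h j) ⬝ᵥ v) : ℝ) : ℂ) := by
    intro v
    rw [hZdef, add_mulVec, dotProduct_add, one_mulVec, JBPS.sum_mulVec', JBPS.dotProduct_sum']
    have hA : ∀ j ∈ univ, star v ⬝ᵥ (((coef k j : ℝ) : ℂ) • vecMulVec (h j) (star (h j))) *ᵥ v
        = ((coef k j * Complex.normSq (star (h j) ⬝ᵥ v) : ℝ) : ℂ) := by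
      intro j _
      rw [smul_mulVec, dotProduct_smul, smul_eq_mul, JBPS.dot_vecMulVec]
      push_cast
      ring
    rw [Finset.sum_congr rfl hA, JBPS.star_dot_self]
    push_cast
    ring
  have hherm : Z.IsHermitian := by
    rw [hZdef]
    show (1 + ∑ j, ((coef k j : ℝ) : ℂ) • vecMulVec (h j) (star (h j)))ᴴ = _
    rw [conjTranspose_add, conjTranspose_one, conjTranspose_sum]
    congr 1
    refine Finset.sum_congr rfl fun j _ => ?_
    rw [conjTranspose_smul]
    have hv := JBPS.vecMulVec_hermitian (h j)
    unfold Matrix.IsHermitian at hv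
    rw [hv, Complex.star_def, Complex.conj_ofReal]
  have hZpsd : Z.PosSemidef :=
    Matrix.PosSemidef.of_dotProduct_mulVec_nonneg hherm (fun v => by rw [zform]; exact Complex.zero_le_real.mpr (ineq1 k v))
  -- factorization of X k
  obtain ⟨Bm, hBm⟩ : ∃ B : Matrix (Fin Nt) (Fin Nt) ℂ, X k = Bᴴ * B := by
    open scoped MatrixOrder Matrix.Norms.L2Operator in
    exact CStarAlgebra.nonneg_iff_eq_star_mul_self.mp (hPSD k).nonneg
  have htr2 : (X k).trace.re = ∑ i, ∑ a, Complex.normSq (star (Bm i a)) := by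
    rw [hBm]
    unfold Matrix.trace
    rw [Complex.re_sum]
    simp only [show ∀ a, ((Bmᴴ * Bm).diag a) = ∑ i, star (Bm i a) * Bm i a from fun a => by
      simp [Matrix.diag_apply, Matrix.mul_apply, Matrix.conjTranspose_apply]]
    rw [Finset.sum_congr rfl fun a _ => by rw [Complex.re_sum]]
    rw [Finset.sum_comm]
    refine Finset.sum_congr rfl fun i _ => Finset.sum_congr rfl fun a _ => ?_
    rw [Complex.star_def, Complex.normSq_conj, mul_comm, Complex.mul_conj, Complex.ofReal_re]
  have hqf2 : ∀ j, quadForm (h j) (X k)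
      = ∑ i, Complex.normSq (star (h j) ⬝ᵥ (fun a => star (Bm i a))) := by
    intro j
    unfold quadForm
    rw [hBm, ← Matrix.mulVec_mulVec, Matrix.dotProduct_mulVec, ← Matrix.star_mulVec,
      JBPS.star_dot_self, Complex.ofReal_re]
    refine Finset.sum_congr rfl fun i _ => ?_
    have hy : star (h j) ⬝ᵥ (fun a => star (Bm i a)) = star ((Bm *ᵥ h j) i) := by
      simp only [dotProduct, Matrix.mulVec, Pi.star_apply, star_sum, star_mul']
      exact Finset.sum_congr rfl fun a _ => mul_comm _ _
    rw [hy, Complex.star_def, Complex.normSq_conj]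
  have hxrow : ∀ i : Fin Nt, Z *ᵥ (fun a => star (Bm i a)) = 0 := by
    have hper : ∀ i ∈ univ, ((∑ a, Complex.normSq (star (Bm i a)))
        + ∑ j, coef k j * Complex.normSq (star (h j) ⬝ᵥ (fun a => star (Bm i a)))) = 0 := by
      have hsum0 : ∑ i, ((∑ a, Complex.normSq (star (Bm i a)))
          + ∑ j, coef k j * Complex.normSq (star (h j) ⬝ᵥ (fun a => star (Bm i a)))) = 0 := by
        rw [Finset.sum_add_distrib, ← htr2]
        have hsw : ∑ i, ∑ j, coef k j * Complex.normSq (star (h j) ⬝ᵥ fun a => star (Bm i a))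
            = ∑ j, coef k j * quadForm (h j) (X k) := by
          rw [Finset.sum_comm]
          refine Finset.sum_congr rfl fun j _ => ?_
          rw [hqf2 j, Finset.mul_sum]
        rw [hsw]
        exact W0
      exact fun i _ => (Finset.sum_eq_zero_iff_of_nonneg
        (fun i _ => ineq1 k (fun a => star (Bm i a)))).mp hsum0 i (Finset.mem_univ i)
    intro i
    rw [← hZpsd.dotProduct_mulVec_zero_iff, zform, Complex.ofReal_eq_zero]
    exact hper i (Finset.mem_univ i)
  have hZker : ∀ u : Fin Nt → ℂ, Z *ᵥ ((X k) *ᵥ u) = 0 := by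
    intro u
    have hXu : (X k) *ᵥ u = ∑ i, (Bm *ᵥ u) i • (fun a => star (Bm i a)) := by
      rw [hBm, ← Matrix.mulVec_mulVec]
      ext a
      simp only [Matrix.mulVec, dotProduct, Matrix.conjTranspose_apply, Finset.sum_apply,
        Pi.smul_apply, smul_eq_mul]
      exact Finset.sum_congr rfl fun i _ => by ring
    rw [hXu]
    calc Z *ᵥ (∑ i, (Bm *ᵥ u) i • fun a => star (Bm i a))
        = Z.mulVecLin (∑ i, (Bm *ᵥ u) i • fun a => star (Bm i a)) :=
          (Z.mulVecLin_apply _).symm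
      _ = ∑ i, Z.mulVecLin ((Bm *ᵥ u) i • fun a => star (Bm i a)) := by rw [map_sum]
      _ = ∑ i, (Bm *ᵥ u) i • (Z *ᵥ fun a => star (Bm i a)) := by
          refine Finset.sum_congr rfl fun i _ => ?_
          rw [_root_.map_smul, Z.mulVecLin_apply]
      _ = 0 := by
          refine Finset.sum_eq_zero fun i _ => ?_
          rw [hxrow i, smul_zero]
  -- kernel vectors orthogonal to h k vanish
  have kperp : ∀ v : Fin Nt → ℂ, Z *ᵥ v = 0 → star (h k) ⬝ᵥ v = 0 → v = 0 := by
    intro v hv hperp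
    have h0 : (∑ i, Complex.normSq (v i))
        + ∑ j, coef k j * Complex.normSq (star (h j) ⬝ᵥ v) = 0 := by
      have hzf := zform v
      rw [hv, dotProduct_zero] at hzf
      exact Complex.ofReal_eq_zero.mp hzf.symm
    have hnqk : Complex.normSq (star (h k) ⬝ᵥ v) = 0 := by rw [hperp]; simp
    have hcv : (∑ i, Complex.normSq (v i)) + ∑ j, (lam j * δ2 j / QQ j ^ 2
        - lam j * (e j / ζ j) / EE j ^ 2) * Complex.normSq (star (h j) ⬝ᵥ v) = 0 := by
      rw [← h0]
      congr 1
      refine Finset.sum_congr rfl fun j _ => ?_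
      by_cases hj : j = k
      · subst hj
        rw [hnqk]
        ring
      · simp only [hcoef]
        rw [if_neg hj]
    have hAnq : ∀ j, lam j * Complex.normSq (star (h j) ⬝ᵥ v) = 0 := by
      intro j
      have hineq := ineq1 j v
      have hsplit : ∑ j', coef j j' * Complex.normSq (star (h j') ⬝ᵥ v)
          = (∑ j', (lam j' * δ2 j' / QQ j' ^ 2 - lam j' * (e j' / ζ j') / EE j' ^ 2)
              * Complex.normSq (star (h j') ⬝ᵥ v))
            - (lam j * δ2 j * (1 + 1 / γ j) / QQ j ^ 2)
              * Complex.normSq (star (h j) ⬝ᵥ v) := by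
        have hterm : ∀ j' ∈ univ, coef j j' * Complex.normSq (star (h j') ⬝ᵥ v)
            = (lam j' * δ2 j' / QQ j' ^ 2 - lam j' * (e j' / ζ j') / EE j' ^ 2)
                * Complex.normSq (star (h j') ⬝ᵥ v)
              - (if j' = j then (lam j * δ2 j * (1 + 1 / γ j) / QQ j ^ 2)
                  * Complex.normSq (star (h j) ⬝ᵥ v) else 0) := by
          intro j' _
          simp only [hcoef]
          by_cases hj' : j' = j
          · subst hj'
            rw [if_pos rfl, if_pos rfl]
            ring
          · rw [if_neg hj', if_neg hj']
            ring
        rw [Finset.sum_congr rfl hterm, Finset.sum_sub_distrib, Finset.sum_ite_eq' univ j]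
        simp
      rw [hsplit] at hineq
      have hc1 : (lam j * δ2 j * (1 + 1 / γ j) / QQ j ^ 2)
          * Complex.normSq (star (h j) ⬝ᵥ v) ≤ 0 := by linarith
      have hγj := hγ j
      have hfac : 0 ≤ lam j * δ2 j * (1 + 1 / γ j) / QQ j ^ 2 :=
        div_nonneg (mul_nonneg (mul_nonneg (hlam j) (hδ j).le) (by positivity)) (sq_nonneg _)
      have hc0 : (lam j * δ2 j * (1 + 1 / γ j) / QQ j ^ 2)
          * Complex.normSq (star (h j) ⬝ᵥ v) = 0 :=
        le_antisymm hc1 (mul_nonneg hfac (Complex.normSq_nonneg _))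
      rcases mul_eq_zero.mp hc0 with h1 | h2
      · have hlj : lam j = 0 := by
          by_contra hne
          have hlampos : 0 < lam j := lt_of_le_of_ne (hlam j) (Ne.symm hne)
          have hpos : 0 < lam j * δ2 j * (1 + 1 / γ j) / QQ j ^ 2 := by
            apply div_pos
            · exact mul_pos (mul_pos hlampos (hδ j)) (by positivity)
            · exact pow_pos (hQpos j) 2
          exact absurd h1 hpos.ne'
        rw [hlj, zero_mul]
      · rw [h2, mul_zero]
    have hBnq : ∀ j, (lam j * (e j / ζ j) / EE j ^ 2)
        * Complex.normSq (star (h j) ⬝ᵥ v) = 0 := by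
      intro j
      rcases mul_eq_zero.mp (hAnq j) with h1 | h2
      · rw [h1]; ring
      · rw [h2, mul_zero]
    have hA2 : ∀ j, (lam j * δ2 j / QQ j ^ 2) * Complex.normSq (star (h j) ⬝ᵥ v) = 0 := by
      intro j
      rcases mul_eq_zero.mp (hAnq j) with h1 | h2
      · rw [h1]; ring
      · rw [h2, mul_zero]
    have hsz : ∑ j, (lam j * δ2 j / QQ j ^ 2 - lam j * (e j / ζ j) / EE j ^ 2)
        * Complex.normSq (star (h j) ⬝ᵥ v) = 0 := by
      refine Finset.sum_eq_zero fun j _ => ?_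
      linear_combination hA2 j - hBnq j
    have hnv : (∑ i, Complex.normSq (v i)) = 0 := by linarith
    funext i
    have hi : Complex.normSq (v i) = 0 :=
      (Finset.sum_eq_zero_iff_of_nonneg (fun i _ => Complex.normSq_nonneg _)).mp hnv i
        (Finset.mem_univ i)
    simpa using Complex.normSq_eq_zero.mp hi
  -- nonvanishing of X k *ᵥ h k
  have hvne : (X k) *ᵥ (h k) ≠ 0 := by
    intro hc
    have h1 : quadForm (h k) (X k) = 0 := by
      unfold quadForm
      rw [hc, dotProduct_zero]
      simp
    linarith [hS k]
  have hZv0 : Z *ᵥ ((X k) *ᵥ (h k)) = 0 := hZker (h k)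
  have hs0 : star (h k) ⬝ᵥ ((X k) *ᵥ (h k)) ≠ 0 := fun h0 => hvne (kperp _ hZv0 h0)
  have hpair : ∀ w : Fin Nt → ℂ, Z *ᵥ w = 0 → ∃ c : ℂ, c • ((X k) *ᵥ (h k)) = w := by
    intro w hw
    have hcombZ : Z *ᵥ ((star (h k) ⬝ᵥ ((X k) *ᵥ (h k))) • w
        - (star (h k) ⬝ᵥ w) • ((X k) *ᵥ (h k))) = 0 := by
      rw [Matrix.mulVec_sub, Matrix.mulVec_smul, Matrix.mulVec_smul, hw, hZv0]
      simp
    have hcombp : star (h k) ⬝ᵥ ((star (h k) ⬝ᵥ ((X k) *ᵥ (h k))) • w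
        - (star (h k) ⬝ᵥ w) • ((X k) *ᵥ (h k))) = 0 := by
      rw [dotProduct_sub, dotProduct_smul, dotProduct_smul]
      simp only [smul_eq_mul]
      ring
    have hzero := kperp _ hcombZ hcombp
    have heq : (star (h k) ⬝ᵥ ((X k) *ᵥ (h k))) • w
        = (star (h k) ⬝ᵥ w) • ((X k) *ᵥ (h k)) := by rwa [sub_eq_zero] at hzero
    refine ⟨(star (h k) ⬝ᵥ ((X k) *ᵥ (h k)))⁻¹ * (star (h k) ⬝ᵥ w), ?_⟩
    rw [← smul_smul, ← heq, inv_smul_smul₀ hs0]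
  have hle : (X k).rank ≤ 1 := by
    unfold Matrix.rank
    have hmem : (X k) *ᵥ (h k) ∈ LinearMap.range (X k).mulVecLin :=
      ⟨h k, by rw [Matrix.mulVecLin_apply]⟩
    apply finrank_le_one (⟨(X k) *ᵥ (h k), hmem⟩ : LinearMap.range (X k).mulVecLin)
    rintro ⟨w, hwmem⟩
    obtain ⟨u, hu⟩ := hwmem
    rw [Matrix.mulVecLin_apply] at hu
    have hwZ : Z *ᵥ w = 0 := by rw [← hu]; exact hZker u
    obtain ⟨c, hc⟩ := hpair w hwZ
    exact ⟨c, Subtype.ext (by simpa using hc)⟩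
  have hne0 : (X k).rank ≠ 0 := by
    intro h0
    unfold Matrix.rank at h0
    have hzero : LinearMap.range (X k).mulVecLin = ⊥ := Submodule.finrank_eq_zero.mp h0
    have hmem : (X k) *ᵥ (h k) ∈ LinearMap.range (X k).mulVecLin :=
      ⟨h k, by rw [Matrix.mulVecLin_apply]⟩
    rw [hzero] at hmem
    exact hvne (by simpa using hmem)
  omega
end
end

section
/- Assume K ≤ N_t and P_k h_k ≠ 0 for every k, where P_k is the orthogonal projection of ℂ^{N_t} onto the orthogonal complement of span{h_j : j ≠ k}. Define α_k = e_k/(ζ_k(γ_k+1)σ_k²), β_k = γ_k δ_k²/((γ_k+1)σ_k²), ρ̄_k* = (−(α_k+β_k−1) + √((α_k+β_k−1)² + 4β_k))/2, and v̄_k* = √(γ_k(σ_k² + δ_k²/ρ̄_k*)) · P_k h_k / ‖P_k h_k‖². Then ({v̄_k*}, {ρ̄_k*}) is an optimal solution of the ZF problem: it is feasible and Σ_k ‖v̄_k*‖² ≤ Σ_k ‖v_k‖² for every feasible ({v_k}, {ρ_k}) of the ZF problem. -/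
noncomputable section

open Finset

/-- Facts about the positive root of `r^2 + (a+b-1)r - b = 0`. -/
lemma zf_root_facts (a b : ℝ) (ha : 0 < a) (hb : 0 < b) (r : ℝ)
    (hr : r = (-(a + b - 1) + Real.sqrt ((a + b - 1) ^ 2 + 4 * b)) / 2) :
    0 < r ∧ r < 1 ∧ a * r = (1 - r) * (r + b) := by
  set c := a + b - 1 with hc
  have hs : Real.sqrt (c ^ 2 + 4 * b) ^ 2 = c ^ 2 + 4 * b :=
    Real.sq_sqrt (by positivity)
  have hsnn : 0 ≤ Real.sqrt (c ^ 2 + 4 * b) := Real.sqrt_nonneg _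
  have h1 : c < Real.sqrt (c ^ 2 + 4 * b) := by
    nlinarith [abs_nonneg c, le_abs_self c, sq_abs c]
  have h2 : Real.sqrt (c ^ 2 + 4 * b) < 2 + c := by
    nlinarith [sq_abs c, le_abs_self c]
  have hr0 : 0 < r := by rw [hr]; linarith
  have hr1 : r < 1 := by rw [hr]; linarith
  have hquad : r ^ 2 + c * r - b = 0 := by
    have : (2 * r - (-c + Real.sqrt (c ^ 2 + 4 * b))) = 0 := by rw [hr]; ring
    nlinarith [this, hs]
  exact ⟨hr0, hr1, by nlinarith [hquad]⟩

/-- Orthogonal projection of `h k` onto the orthogonal complement of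
`span {h j : j ≠ k}` (the zero-forcing direction of user `k`). -/
def zfProj {K Nt : ℕ} (h : Fin K → EuclideanSpace ℂ (Fin Nt)) (k : Fin K) :
    EuclideanSpace ℂ (Fin Nt) :=
  (Submodule.orthogonalProjectionOnto ((Submodule.span ℂ (h '' {j | j ≠ k}))ᗮ) (h k) :
    EuclideanSpace ℂ (Fin Nt))

lemma zfProj_mem {K Nt : ℕ} (h : Fin K → EuclideanSpace ℂ (Fin Nt)) (k : Fin K) :
    zfProj h k ∈ (Submodule.span ℂ (h '' {j | j ≠ k}))ᗮ :=
  (Submodule.orthogonalProjectionOnto _ (h k)).2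

lemma inner_h_zfProj {K Nt : ℕ} (h : Fin K → EuclideanSpace ℂ (Fin Nt)) (k : Fin K) :
    (inner ℂ (h k) (zfProj h k) : ℂ) = (‖zfProj h k‖ ^ 2 : ℝ) := by
  set W := (Submodule.span ℂ (h '' {j | j ≠ k}))ᗮ
  have hsub : h k - zfProj h k ∈ Wᗮ := Submodule.sub_starProjection_mem_orthogonal (K := W) (h k)
  have h0 : (inner ℂ (h k - zfProj h k) (zfProj h k) : ℂ) = 0 :=
    Submodule.inner_left_of_mem_orthogonal (zfProj_mem h k) hsub
  have : (inner ℂ (h k) (zfProj h k) : ℂ) = inner ℂ (zfProj h k) (zfProj h k) := by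
    rw [← sub_eq_zero, ← inner_sub_left]; exact h0
  rw [this, inner_self_eq_norm_sq_to_K]
  norm_cast

/-- `h j ⊥ zfProj h k` for `j ≠ k`. -/
lemma inner_hj_zfProj {K Nt : ℕ} (h : Fin K → EuclideanSpace ℂ (Fin Nt)) {j k : Fin K}
    (hjk : j ≠ k) : (inner ℂ (h j) (zfProj h k) : ℂ) = 0 :=
  Submodule.inner_right_of_mem_orthogonal
    (Submodule.subset_span (Set.mem_image_of_mem h hjk)) (zfProj_mem h k)

/-- If `w` is orthogonal to every `h j`, `j ≠ k`, then `⟪h k, w⟫ = ⟪zfProj h k, w⟫`. -/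
lemma inner_eq_inner_zfProj {K Nt : ℕ} (h : Fin K → EuclideanSpace ℂ (Fin Nt)) (k : Fin K)
    (w : EuclideanSpace ℂ (Fin Nt)) (hw : ∀ j, j ≠ k → (inner ℂ (h j) w : ℂ) = 0) :
    (inner ℂ (h k) w : ℂ) = inner ℂ (zfProj h k) w := by
  set W := (Submodule.span ℂ (h '' {j | j ≠ k}))ᗮ
  have hwW : w ∈ W := by
    have hle : Submodule.span ℂ (h '' {j | j ≠ k}) ≤ (ℂ ∙ w)ᗮ := by
      rw [Submodule.span_le]
      rintro u ⟨j, hj, rfl⟩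
      exact Submodule.mem_orthogonal_singleton_iff_inner_left.2 (hw j hj)
    exact Submodule.orthogonal_le hle
      (Submodule.le_orthogonal_orthogonal _ (Submodule.mem_span_singleton_self w))
  have hsub : h k - zfProj h k ∈ Wᗮ := Submodule.sub_starProjection_mem_orthogonal (K := W) (h k)
  have h0 : (inner ℂ (h k - zfProj h k) w : ℂ) = 0 :=
    Submodule.inner_left_of_mem_orthogonal hwW hsub
  rw [← sub_eq_zero, ← inner_sub_left]; exact h0

/-- Feasibility of the zero-forcing (ZF) problem. -/
def ZFFeasible {K Nt : ℕ} (h : Fin K → EuclideanSpace ℂ (Fin Nt))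
    (σ2 δ2 ζ γ e : Fin K → ℝ)
    (v : Fin K → EuclideanSpace ℂ (Fin Nt)) (ρ : Fin K → ℝ) : Prop :=
  (∀ k, 0 < ρ k ∧ ρ k < 1) ∧
  (∀ k, γ k ≤ ρ k * ‖(inner ℂ (h k) (v k) : ℂ)‖ ^ 2 / (ρ k * σ2 k + δ2 k)) ∧
  (∀ k, e k ≤ ζ k * (1 - ρ k) * (‖(inner ℂ (h k) (v k) : ℂ)‖ ^ 2 + σ2 k)) ∧
  (∀ k, ∀ j, j ≠ k → (inner ℂ (h j) (v k) : ℂ) = 0)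

theorem zf_closed_form_optimal (K Nt : ℕ) (hKNt : K ≤ Nt)
    (h : Fin K → EuclideanSpace ℂ (Fin Nt)) (σ2 δ2 ζ γ e : Fin K → ℝ)
    (hσ : ∀ k, 0 < σ2 k) (hδ : ∀ k, 0 < δ2 k)
    (hζ : ∀ k, 0 < ζ k ∧ ζ k ≤ 1) (hγ : ∀ k, 0 < γ k) (he : ∀ k, 0 < e k)
    (hproj : ∀ k, zfProj h k ≠ 0)
    (α β ρ : Fin K → ℝ)
    (hα : ∀ k, α k = e k / (ζ k * (γ k + 1) * σ2 k))
    (hβ : ∀ k, β k = γ k * δ2 k / ((γ k + 1) * σ2 k))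
    (hρ : ∀ k, ρ k =
      (-(α k + β k - 1) + Real.sqrt ((α k + β k - 1) ^ 2 + 4 * β k)) / 2)
    (v : Fin K → EuclideanSpace ℂ (Fin Nt))
    (hv : ∀ k, v k =
      (Real.sqrt (γ k * (σ2 k + δ2 k / ρ k)) / ‖zfProj h k‖ ^ 2 : ℝ) • zfProj h k) :
    ZFFeasible h σ2 δ2 ζ γ e v ρ ∧
    ∀ (v' : Fin K → EuclideanSpace ℂ (Fin Nt)) (ρ' : Fin K → ℝ),
      ZFFeasible h σ2 δ2 ζ γ e v' ρ' → (∑ k, ‖v k‖ ^ 2) ≤ ∑ k, ‖v' k‖ ^ 2 := by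
  have hαpos : ∀ k, 0 < α k := fun k => by
    rw [hα]; have := (hζ k).1; have := hσ k; have := hγ k; have := he k; positivity
  have hβpos : ∀ k, 0 < β k := fun k => by
    rw [hβ]; have := hσ k; have := hδ k; have := hγ k; positivity
  have hroot : ∀ k, 0 < ρ k ∧ ρ k < 1 ∧ α k * ρ k = (1 - ρ k) * (ρ k + β k) :=
    fun k => zf_root_facts _ _ (hαpos k) (hβpos k) _ (hρ k)
  have hnp : ∀ k, (0:ℝ) < ‖zfProj h k‖ := fun k => norm_pos_iff.mpr (hproj k)
  have hSpos : ∀ k, 0 < γ k * (σ2 k + δ2 k / ρ k) := fun k => by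
    have := (hroot k).1; have := hσ k; have := hδ k; have := hγ k; positivity
  have hXval : ∀ k, (inner ℂ (h k) (v k) : ℂ) =
      ((Real.sqrt (γ k * (σ2 k + δ2 k / ρ k)) : ℝ) : ℂ) := by
    intro k
    rw [hv k, RCLike.real_smul_eq_coe_smul (K := ℂ), inner_smul_right, inner_h_zfProj]
    have hne : ((‖zfProj h k‖ : ℝ) : ℂ) ≠ 0 :=
      Complex.ofReal_ne_zero.mpr (ne_of_gt (hnp k))
    push_cast
    field_simp
    exact mul_div_cancel_right₀ _ (pow_ne_zero 2 hne)
  have hX2 : ∀ k, ‖(inner ℂ (h k) (v k) : ℂ)‖ ^ 2 = γ k * (σ2 k + δ2 k / ρ k) := by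
    intro k
    rw [hXval k, Complex.norm_real, Real.norm_eq_abs, sq_abs,
      Real.sq_sqrt (le_of_lt (hSpos k))]
  have hvk2 : ∀ k, ‖v k‖ ^ 2 = γ k * (σ2 k + δ2 k / ρ k) / ‖zfProj h k‖ ^ 2 := by
    intro k
    rw [hv k, norm_smul, Real.norm_eq_abs,
      abs_of_nonneg (by positivity :
        (0:ℝ) ≤ Real.sqrt (γ k * (σ2 k + δ2 k / ρ k)) / ‖zfProj h k‖ ^ 2)]
    rw [mul_pow, div_pow, Real.sq_sqrt (le_of_lt (hSpos k))]
    have := hnp k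
    field_simp
  have henergy : ∀ k, e k = ζ k * (1 - ρ k) * (γ k * (σ2 k + δ2 k / ρ k) + σ2 k) := by
    intro k
    have hkey := (hroot k).2.2
    rw [hα k, hβ k] at hkey
    have h1 := (hζ k).1
    have h2 := hσ k
    have h3 := hγ k
    have h4 := (hroot k).1
    have hg1 : (0:ℝ) < γ k + 1 := by linarith
    have hne : ((γ k + 1) * σ2 k) ≠ 0 := by positivity
    field_simp at hkey ⊢
    refine mul_left_cancel₀ hne ?_
    linear_combination ((γ k + 1) * σ2 k) * hkey
  constructor
  · refine ⟨fun k => ⟨(hroot k).1, (hroot k).2.1⟩, ?_, ?_, ?_⟩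
    · intro k
      have hd : ρ k * σ2 k + δ2 k ≠ 0 := by
        have := (hroot k).1; have := hσ k; have := hδ k; positivity
      have hρ0 : ρ k ≠ 0 := ne_of_gt (hroot k).1
      rw [hX2 k]
      apply le_of_eq
      field_simp
    · intro k
      rw [hX2 k]
      exact le_of_eq (henergy k)
    · intro k j hj
      rw [hv k, RCLike.real_smul_eq_coe_smul (K := ℂ), inner_smul_right,
        inner_hj_zfProj h hj, mul_zero]
  · intro v' ρ' hf
    obtain ⟨h01, hS, hE, hZ⟩ := hf
    apply Finset.sum_le_sum
    intro k _
    have hρ'0 : 0 < ρ' k := (h01 k).1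
    have hρ'1 : ρ' k < 1 := (h01 k).2
    have hρ0 : 0 < ρ k := (hroot k).1
    have hρ1 : ρ k < 1 := (hroot k).2.1
    set Y := ‖(inner ℂ (h k) (v' k) : ℂ)‖ ^ 2 with hY
    have hYnn : 0 ≤ Y := by positivity
    have hd' : (0:ℝ) < ρ' k * σ2 k + δ2 k := by
      have := hσ k; have := hδ k; positivity
    have hSk : γ k * (ρ' k * σ2 k + δ2 k) ≤ ρ' k * Y :=
      (le_div_iff₀ hd').1 (hS k)
    have hEk := hE k
    have hLY : γ k * (σ2 k + δ2 k / ρ k) ≤ Y := by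
      rcases le_or_gt (ρ' k) (ρ k) with hle | hlt
      · have h1 : γ k * (σ2 k + δ2 k / ρ' k) ≤ Y := by
          have h2 : γ k * (σ2 k + δ2 k / ρ' k) * ρ' k ≤ Y * ρ' k := by
            have heq : γ k * (σ2 k + δ2 k / ρ' k) * ρ' k
                = γ k * (ρ' k * σ2 k + δ2 k) := by
              field_simp
            rw [heq]
            linarith [hSk]
          exact le_of_mul_le_mul_right h2 hρ'0
        have h3 : δ2 k / ρ k ≤ δ2 k / ρ' k :=
          div_le_div_of_nonneg_left (le_of_lt (hδ k)) hρ'0 hle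
        have h4 : γ k * (σ2 k + δ2 k / ρ k) ≤ γ k * (σ2 k + δ2 k / ρ' k) := by
          apply mul_le_mul_of_nonneg_left _ (le_of_lt (hγ k))
          linarith
        linarith
      · have heq := henergy k
        have hζ0 := (hζ k).1
        have hLnn : 0 ≤ γ k * (σ2 k + δ2 k / ρ k) + σ2 k := by
          have := hSpos k; have := hσ k; linarith
        nlinarith [mul_pos hζ0 (sub_pos.2 hρ'1),
          mul_nonneg (mul_nonneg (le_of_lt hζ0) hLnn) (le_of_lt (sub_pos.2 hlt))]
    have hcs : Y ≤ ‖zfProj h k‖ ^ 2 * ‖v' k‖ ^ 2 := by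
      have h1 : (inner ℂ (h k) (v' k) : ℂ) = inner ℂ (zfProj h k) (v' k) :=
        inner_eq_inner_zfProj h k (v' k) (fun j hj => hZ k j hj)
      rw [hY, h1]
      calc ‖(inner ℂ (zfProj h k) (v' k) : ℂ)‖ ^ 2
          ≤ (‖zfProj h k‖ * ‖v' k‖) ^ 2 :=
            pow_le_pow_left₀ (norm_nonneg _) (norm_inner_le_norm _ _) 2
        _ = ‖zfProj h k‖ ^ 2 * ‖v' k‖ ^ 2 := by ring
    have hnp2 : (0:ℝ) < ‖zfProj h k‖ ^ 2 := pow_pos (hnp k) 2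
    rw [hvk2 k]
    calc γ k * (σ2 k + δ2 k / ρ k) / ‖zfProj h k‖ ^ 2
        ≤ Y / ‖zfProj h k‖ ^ 2 := by gcongr
      _ ≤ ‖v' k‖ ^ 2 := by
          rw [div_le_iff₀ hnp2]
          linarith [hcs]
end
end

section
/- Consider the single-user ZF subproblem: minimize ‖v‖² over v ∈ ℂ^{N_t} and ρ subject to ρ|h^H v|²/(ρσ² + δ²) ≥ γ, ζ(1−ρ)(|h^H v|² + σ²) ≥ e, h_j^H v = 0 for all j in a given index set J, and 0 < ρ < 1, where γ, e, δ², ζ > 0, σ² ≥ 0, and the projection of h onto the orthogonal complement of span{h_j : j ∈ J} is nonzero. Then at any optimal solution (v*, ρ*) both inequality constraints hold with equality: ρ*|h^H v*|²/(ρ*σ² + δ²) = γ and ζ(1−ρ*)(|h^H v*|² + σ²) = e. -/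
noncomputable section

/-- Feasibility for the single-user zero-forcing subproblem. -/
def SUFeasible {Nt : ℕ} {ι : Type*} (h : EuclideanSpace ℂ (Fin Nt))
    (hj : ι → EuclideanSpace ℂ (Fin Nt)) (σ2 δ2 ζ γ e : ℝ)
    (v : EuclideanSpace ℂ (Fin Nt)) (ρ : ℝ) : Prop :=
  0 < ρ ∧ ρ < 1 ∧
  γ ≤ ρ * ‖(inner ℂ h v : ℂ)‖ ^ 2 / (ρ * σ2 + δ2) ∧
  e ≤ ζ * (1 - ρ) * (‖(inner ℂ h v : ℂ)‖ ^ 2 + σ2) ∧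
  ∀ j, (inner ℂ (hj j) v : ℂ) = 0

theorem single_user_zf_constraints_active (Nt : ℕ) {ι : Type*} [Fintype ι]
    (h : EuclideanSpace ℂ (Fin Nt)) (hj : ι → EuclideanSpace ℂ (Fin Nt))
    (σ2 δ2 ζ γ e : ℝ) (hσ : 0 ≤ σ2) (hδ : 0 < δ2) (hζ : 0 < ζ)
    (hγ : 0 < γ) (he : 0 < e)
    (hproj :
      (Submodule.orthogonalProjectionOnto ((Submodule.span ℂ (Set.range hj))ᗮ) h :
        EuclideanSpace ℂ (Fin Nt)) ≠ 0)
    (v : EuclideanSpace ℂ (Fin Nt)) (ρ : ℝ)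
    (hfeas : SUFeasible h hj σ2 δ2 ζ γ e v ρ)
    (hopt : ∀ (v' : EuclideanSpace ℂ (Fin Nt)) (ρ' : ℝ),
      SUFeasible h hj σ2 δ2 ζ γ e v' ρ' → ‖v‖ ^ 2 ≤ ‖v'‖ ^ 2) :
    ρ * ‖(inner ℂ h v : ℂ)‖ ^ 2 / (ρ * σ2 + δ2) = γ ∧
    ζ * (1 - ρ) * (‖(inner ℂ h v : ℂ)‖ ^ 2 + σ2) = e := by
  obtain ⟨hρ0, hρ1, hsinr, heh, hzf⟩ := hfeas
  set P : ℝ := ‖(inner ℂ h v : ℂ)‖ ^ 2 with hPdef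
  have hden : 0 < ρ * σ2 + δ2 := by positivity
  have hPpos : 0 < P := by
    by_contra hP
    push_neg at hP
    have hP0 : P = 0 := le_antisymm hP (by positivity)
    rw [hP0] at hsinr
    simp only [mul_zero, zero_div] at hsinr
    linarith
  have hvpos : 0 < ‖v‖ ^ 2 := by
    have hiv : (inner ℂ h v : ℂ) ≠ 0 := by
      intro h0
      rw [hPdef, h0] at hPpos; simp at hPpos
    have hv : v ≠ 0 := by rintro rfl; simp [inner_zero_right] at hiv
    exact pow_pos (norm_pos_iff.mpr hv) 2
  -- key: if both constraints are strictly slack at some ρ', contradiction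
  have key : ∀ ρ' : ℝ, 0 < ρ' → ρ' < 1 →
      γ < ρ' * P / (ρ' * σ2 + δ2) → e < ζ * (1 - ρ') * (P + σ2) → False := by
    intro ρ' h0 h1 hs he'
    have hden' : 0 < ρ' * σ2 + δ2 := by positivity
    have hFc : ContinuousAt (fun t : ℝ => ρ' * (t ^ 2 * P) / (ρ' * σ2 + δ2)) 1 := by
      fun_prop
    have hGc : ContinuousAt (fun t : ℝ => ζ * (1 - ρ') * (t ^ 2 * P + σ2)) 1 := by
      fun_prop
    have e1 : ∀ᶠ t : ℝ in nhds 1, γ < ρ' * (t ^ 2 * P) / (ρ' * σ2 + δ2) :=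
      continuousAt_const.eventually_lt hFc (by simpa using hs)
    have e2 : ∀ᶠ t : ℝ in nhds 1, e < ζ * (1 - ρ') * (t ^ 2 * P + σ2) :=
      continuousAt_const.eventually_lt hGc (by simpa using he')
    have e3 : ∀ᶠ t : ℝ in nhds 1, (0 : ℝ) < t := eventually_gt_nhds (by norm_num)
    have hev : ∀ᶠ t : ℝ in nhdsWithin 1 (Set.Iio 1),
        ((γ < ρ' * (t ^ 2 * P) / (ρ' * σ2 + δ2) ∧
          e < ζ * (1 - ρ') * (t ^ 2 * P + σ2)) ∧ 0 < t) ∧ t < 1 :=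
      (((e1.and e2).and e3).filter_mono nhdsWithin_le_nhds).and
        eventually_mem_nhdsWithin
    obtain ⟨t, ⟨⟨hFt, hGt⟩, ht0⟩, ht1⟩ := hev.exists
    have hinner : ‖(inner ℂ h ((t : ℂ) • v) : ℂ)‖ ^ 2 = t ^ 2 * P := by
      rw [inner_smul_right, norm_mul, Complex.norm_real, Real.norm_eq_abs, mul_pow, sq_abs]
    have hfeas' : SUFeasible h hj σ2 δ2 ζ γ e ((t : ℂ) • v) ρ' := by
      refine ⟨h0, h1, ?_, ?_, ?_⟩
      · rw [hinner]; exact le_of_lt hFt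
      · rw [hinner]; exact le_of_lt hGt
      · intro j; rw [inner_smul_right, hzf j, mul_zero]
    have hle := hopt _ _ hfeas'
    have hnorm : ‖(t : ℂ) • v‖ ^ 2 = t ^ 2 * ‖v‖ ^ 2 := by
      rw [norm_smul, Complex.norm_real, Real.norm_eq_abs, mul_pow, sq_abs]
    rw [hnorm] at hle
    nlinarith [mul_pos (sub_pos.mpr ht1) (show (0:ℝ) < 1 + t by linarith), hvpos]
  constructor
  · by_contra hne
    have hs : γ < ρ * P / (ρ * σ2 + δ2) := lt_of_le_of_ne hsinr (Ne.symm hne)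
    -- decrease ρ slightly: SINR stays strict, EH becomes strict
    have hFc : ContinuousAt (fun r : ℝ => r * P / (r * σ2 + δ2)) ρ := by
      apply ContinuousAt.div
      · fun_prop
      · fun_prop
      · exact ne_of_gt hden
    have e1 : ∀ᶠ r : ℝ in nhds ρ, γ < r * P / (r * σ2 + δ2) :=
      continuousAt_const.eventually_lt hFc hs
    have e3 : ∀ᶠ r : ℝ in nhds ρ, (0 : ℝ) < r := eventually_gt_nhds hρ0
    have hev : ∀ᶠ r : ℝ in nhdsWithin ρ (Set.Iio ρ),
        ((γ < r * P / (r * σ2 + δ2)) ∧ 0 < r) ∧ r < ρ :=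
      ((e1.and e3).filter_mono nhdsWithin_le_nhds).and eventually_mem_nhdsWithin
    obtain ⟨r, ⟨hFr, hr0⟩, hrρ⟩ := hev.exists
    refine key r hr0 (lt_trans hrρ hρ1) hFr ?_
    have : ζ * (1 - ρ) * (P + σ2) < ζ * (1 - r) * (P + σ2) := by nlinarith
    linarith
  · by_contra hne
    have hs : e < ζ * (1 - ρ) * (P + σ2) := lt_of_le_of_ne heh (Ne.symm hne)
    -- increase ρ slightly: EH stays strict, SINR becomes strict
    have hGc : ContinuousAt (fun r : ℝ => ζ * (1 - r) * (P + σ2)) ρ := by fun_prop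
    have e2 : ∀ᶠ r : ℝ in nhds ρ, e < ζ * (1 - r) * (P + σ2) :=
      continuousAt_const.eventually_lt hGc hs
    have e3 : ∀ᶠ r : ℝ in nhds ρ, r < 1 := eventually_lt_nhds hρ1
    have hev : ∀ᶠ r : ℝ in nhdsWithin ρ (Set.Ioi ρ),
        ((e < ζ * (1 - r) * (P + σ2)) ∧ r < 1) ∧ ρ < r :=
      ((e2.and e3).filter_mono nhdsWithin_le_nhds).and eventually_mem_nhdsWithin
    obtain ⟨r, ⟨hGr, hr1⟩, hρr⟩ := hev.exists
    have hr0 : 0 < r := lt_trans hρ0 hρr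
    have hdenr : 0 < r * σ2 + δ2 :=
      add_pos_of_nonneg_of_pos (mul_nonneg hr0.le hσ) hδ
    refine key r hr0 hr1 ?_ hGr
    have hmono : ρ * P / (ρ * σ2 + δ2) < r * P / (r * σ2 + δ2) := by
      rw [div_lt_div_iff₀ hden hdenr]
      nlinarith [mul_pos (mul_pos hPpos hδ) (sub_pos.mpr hρr)]
    linarith
end
end

section
/- Suppose v̂_1,…,v̂_K ∈ ℂ^{N_t} satisfy the SINR constraints with equality: |h_k^H v̂_k|²/(Σ_{j≠k}|h_k^H v̂_j|² + σ_k² + δ_k²) = γ_k for all k. Then the scaled problem is feasible: there exist α > 1 and ρ_1,…,ρ_K ∈ (0,1) such that SINR_k(√α·v̂, ρ) ≥ γ_k and E_k(√α·v̂, ρ) ≥ e_k for all k. Conversely, if the scaled problem is feasible for some v̂_1,…,v̂_K, then the JBPS problem is feasible. -/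
noncomputable section

open Finset

/-- The family `(√α v̂_1, …, √α v̂_K)`. -/
def scaled {K Nt : ℕ} (α : ℝ) (v : Fin K → EuclideanSpace ℂ (Fin Nt)) :
    Fin K → EuclideanSpace ℂ (Fin Nt) :=
  fun k => (Real.sqrt α : ℂ) • v k

lemma inner_scaled_sq {K Nt : ℕ} (h : Fin K → EuclideanSpace ℂ (Fin Nt))
    (v : Fin K → EuclideanSpace ℂ (Fin Nt)) (α : ℝ) (hα : 0 ≤ α) (k j : Fin K) :
    ‖(inner ℂ (h k) (scaled α v j) : ℂ)‖ ^ 2 = α * ‖(inner ℂ (h k) (v j) : ℂ)‖ ^ 2 := by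
  simp only [scaled, inner_smul_right, norm_mul, mul_pow, Complex.norm_real,
    Real.norm_eq_abs, abs_of_nonneg (Real.sqrt_nonneg α)]
  rw [Real.sq_sqrt hα]

theorem scaled_problem_feasibility (K Nt : ℕ) (hK : 1 ≤ K) (hNt : 1 ≤ Nt)
    (h : Fin K → EuclideanSpace ℂ (Fin Nt)) (σ2 δ2 ζ γ e : Fin K → ℝ)
    (hσ : ∀ k, 0 < σ2 k) (hδ : ∀ k, 0 < δ2 k)
    (hζ : ∀ k, 0 < ζ k ∧ ζ k ≤ 1) (hγ : ∀ k, 0 < γ k) (he : ∀ k, 0 < e k)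
    (vh : Fin K → EuclideanSpace ℂ (Fin Nt))
    (heq : ∀ k, ‖(inner ℂ (h k) (vh k) : ℂ)‖ ^ 2 /
      ((∑ j ∈ univ.erase k, ‖(inner ℂ (h k) (vh j) : ℂ)‖ ^ 2) + σ2 k + δ2 k) = γ k) :
    (∃ (α : ℝ) (ρ : Fin K → ℝ), 1 < α ∧ (∀ k, 0 < ρ k ∧ ρ k < 1) ∧
      (∀ k, γ k ≤ SINR h σ2 δ2 (scaled α vh) ρ k) ∧
      (∀ k, e k ≤ EH h σ2 ζ (scaled α vh) ρ k)) ∧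
    (∀ w : Fin K → EuclideanSpace ℂ (Fin Nt),
      (∃ (α : ℝ) (ρ : Fin K → ℝ), 1 < α ∧ (∀ k, 0 < ρ k ∧ ρ k < 1) ∧
        (∀ k, γ k ≤ SINR h σ2 δ2 (scaled α w) ρ k) ∧
        (∀ k, e k ≤ EH h σ2 ζ (scaled α w) ρ k)) →
      ∃ (v : Fin K → EuclideanSpace ℂ (Fin Nt)) (ρ : Fin K → ℝ),
        (∀ k, 0 < ρ k ∧ ρ k < 1) ∧
        (∀ k, γ k ≤ SINR h σ2 δ2 v ρ k) ∧
        (∀ k, e k ≤ EH h σ2 ζ v ρ k)) := by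
  constructor
  · -- forward direction
    set S : Fin K → ℝ := fun k => ‖(inner ℂ (h k) (vh k) : ℂ)‖ ^ 2 with hSdef
    set I : Fin K → ℝ := fun k => ∑ j ∈ univ.erase k, ‖(inner ℂ (h k) (vh j) : ℂ)‖ ^ 2 with hIdef
    set T : Fin K → ℝ := fun k => ∑ j, ‖(inner ℂ (h k) (vh j) : ℂ)‖ ^ 2 with hTdef
    have hI0 : ∀ k, 0 ≤ I k := fun k =>
      Finset.sum_nonneg fun j _ => sq_nonneg _
    have hden : ∀ k, 0 < I k + σ2 k + δ2 k := fun k => by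
      have := hσ k; have := hδ k; have := hI0 k; linarith
    have hS : ∀ k, S k = γ k * (I k + σ2 k + δ2 k) := fun k => by
      have h1 := heq k
      rw [div_eq_iff (hden k).ne'] at h1
      exact h1
    have hSpos : ∀ k, 0 < S k := fun k => by
      rw [hS k]; exact mul_pos (hγ k) (hden k)
    have hTeq : ∀ k, T k = S k + I k := fun k => by
      simp only [hTdef, hSdef, hIdef]
      rw [← Finset.add_sum_erase _ _ (Finset.mem_univ k)]
    have hTpos : ∀ k, 0 < T k := fun k => by
      rw [hTeq k]; have := hSpos k; have := hI0 k; linarith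
    set α : ℝ := 2 + ∑ k, 2 * e k / (ζ k * T k) with hαdef
    have hterm : ∀ k : Fin K, 0 < 2 * e k / (ζ k * T k) := fun k =>
      div_pos (by linarith [he k]) (mul_pos (hζ k).1 (hTpos k))
    have hα2 : 2 ≤ α := by
      have : 0 ≤ ∑ k, 2 * e k / (ζ k * T k) :=
        Finset.sum_nonneg fun k _ => (hterm k).le
      rw [hαdef]
      linarith
    have hα1 : 1 < α := by linarith
    have hα0 : 0 ≤ α := by linarith
    have hαk : ∀ k, 2 * e k / (ζ k * T k) ≤ α := fun k => by
      have : 2 * e k / (ζ k * T k) ≤ ∑ j, 2 * e j / (ζ j * T j) :=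
        Finset.single_le_sum (fun j _ => (hterm j).le) (Finset.mem_univ k)
      have h4 : (0:ℝ) ≤ 2 := by norm_num
      calc 2 * e k / (ζ k * T k) ≤ ∑ j, 2 * e j / (ζ j * T j) := this
        _ ≤ α := by rw [hαdef]; linarith
    set ρ : Fin K → ℝ := fun k => δ2 k / (α * δ2 k + (α - 1) * σ2 k) with hρdef
    have hD : ∀ k, δ2 k < α * δ2 k + (α - 1) * σ2 k := fun k => by
      nlinarith [hδ k, hσ k]
    have hDpos : ∀ k, 0 < α * δ2 k + (α - 1) * σ2 k := fun k =>
      lt_trans (hδ k) (hD k)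
    have hρpos : ∀ k, 0 < ρ k := fun k => div_pos (hδ k) (hDpos k)
    have hρlt1 : ∀ k, ρ k < 1 :=
      fun k => (div_lt_one (hDpos k)).2 (hD k)
    have hρD : ∀ k, ρ k * (α * δ2 k + (α - 1) * σ2 k) = δ2 k := fun k =>
      div_mul_cancel₀ _ (hDpos k).ne'
    have hρhalf : ∀ k, ρ k ≤ 1 / 2 := fun k => by
      rw [hρdef, div_le_div_iff₀ (hDpos k) (by norm_num)]
      nlinarith [hδ k, hσ k]
    refine ⟨α, ρ, hα1, fun k => ⟨hρpos k, hρlt1 k⟩, ?_, ?_⟩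
    · intro k
      unfold SINR
      simp only [inner_scaled_sq h vh α hα0, ← Finset.mul_sum]
      rw [le_div_iff₀]
      · have key : ρ k * α * (σ2 k + δ2 k) - ρ k * σ2 k = δ2 k := by
          linear_combination hρD k
        have hSk := hS k
        simp only [hSdef, hIdef] at hSk
        rw [hSk]
        nlinarith [mul_pos (hγ k) (mul_pos (hρpos k) (hDpos k)), key,
          mul_le_mul_of_nonneg_left key.ge (hγ k).le,
          mul_le_mul_of_nonneg_left key.le (hγ k).le]
      · have : 0 ≤ ρ k * (α * I k) :=
          mul_nonneg (hρpos k).le (mul_nonneg hα0 (hI0 k))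
        simp only [hIdef] at this
        nlinarith [mul_pos (hρpos k) (hσ k), hδ k]
    · intro k
      unfold EH
      simp only [inner_scaled_sq h vh α hα0, ← Finset.mul_sum]
      have hT' : α * T k ≥ 2 * e k / ζ k := by
        have h1 := hαk k
        rw [div_le_iff₀ (mul_pos (hζ k).1 (hTpos k))] at h1
        rw [ge_iff_le, div_le_iff₀ (hζ k).1]
        nlinarith [hTpos k]
      have hzne : ζ k ≠ 0 := (hζ k).1.ne'
      calc e k = ζ k * (1 / 2) * (2 * e k / ζ k) := by
            field_simp
        _ ≤ ζ k * (1 / 2) * (α * T k + σ2 k) := by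
            apply mul_le_mul_of_nonneg_left _ (mul_nonneg (hζ k).1.le (by norm_num))
            linarith [hT', hσ k]
        _ ≤ ζ k * (1 - ρ k) * (α * T k + σ2 k) := by
            apply mul_le_mul_of_nonneg_right
            · apply mul_le_mul_of_nonneg_left _ (hζ k).1.le
              linarith [hρhalf k]
            · have h3 : 0 ≤ α * T k := mul_nonneg hα0 (hTpos k).le
              linarith [hσ k]
        _ = ζ k * (1 - ρ k) * (α * ∑ j, ‖(inner ℂ (h k) (vh j) : ℂ)‖ ^ 2 + σ2 k) := by
            rw [hTdef]
  · rintro w ⟨α, ρ, _, hρ, hs, he'⟩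
    exact ⟨scaled α w, ρ, hρ, hs, he'⟩
end
end

section
/- Suppose v̂_1,…,v̂_K ∈ ℂ^{N_t} satisfy the SINR constraints with equality: |h_k^H v̂_k|²/(Σ_{j≠k}|h_k^H v̂_j|² + σ_k² + δ_k²) = γ_k for all k. Define c_k = |h_k^H v̂_k|²/γ_k − Σ_{j≠k}|h_k^H v̂_j|² (so c_k = σ_k² + δ_k²) and d_k = Σ_{j=1}^K |h_k^H v̂_j|². For each k let ᾱ_k be the largest real root of δ_k²/(α c_k − σ_k²) + e_k/(ζ_k(α d_k + σ_k²)) = 1, let α̃* = max_{1≤k≤K} ᾱ_k, and set ρ̃_k* = δ_k²/(α̃* c_k − σ_k²). Then (α̃*, {ρ̃_k*}) is an optimal solution of the scaling problem: α̃* > 1, ρ̃_k* ∈ (0,1), SINR_k(√α̃*·v̂, ρ̃*) ≥ γ_k and E_k(√α̃*·v̂, ρ̃*) ≥ e_k for all k, and α̃* ≤ α for every α > 1 admitting ρ_1,…,ρ_K ∈ (0,1) with SINR_k(√α·v̂, ρ) ≥ γ_k and E_k(√α·v̂, ρ) ≥ e_k for all k. -/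
noncomputable section

open Finset

lemma norm_inner_scaled {K Nt : ℕ} (α : ℝ) (hα : 0 ≤ α)
    (h : EuclideanSpace ℂ (Fin Nt)) (v : Fin K → EuclideanSpace ℂ (Fin Nt)) (j : Fin K) :
    ‖(inner ℂ h (scaled α v j) : ℂ)‖ ^ 2 = α * ‖(inner ℂ h (v j) : ℂ)‖ ^ 2 := by
  rw [scaled, inner_smul_right, norm_mul, mul_pow]
  norm_num [Real.sq_sqrt hα]

theorem scaling_problem_optimal_solution (K Nt : ℕ) (hK : 1 ≤ K) (hNt : 1 ≤ Nt)
    (h : Fin K → EuclideanSpace ℂ (Fin Nt)) (σ2 δ2 ζ γ e : Fin K → ℝ)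
    (hσ : ∀ k, 0 < σ2 k) (hδ : ∀ k, 0 < δ2 k)
    (hζ : ∀ k, 0 < ζ k ∧ ζ k ≤ 1) (hγ : ∀ k, 0 < γ k) (he : ∀ k, 0 < e k)
    (vh : Fin K → EuclideanSpace ℂ (Fin Nt))
    (heq : ∀ k, ‖(inner ℂ (h k) (vh k) : ℂ)‖ ^ 2 /
      ((∑ j ∈ univ.erase k, ‖(inner ℂ (h k) (vh j) : ℂ)‖ ^ 2) + σ2 k + δ2 k) = γ k)
    (c d : Fin K → ℝ)
    (hc : ∀ k, c k = ‖(inner ℂ (h k) (vh k) : ℂ)‖ ^ 2 / γ k -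
      ∑ j ∈ univ.erase k, ‖(inner ℂ (h k) (vh j) : ℂ)‖ ^ 2)
    (hd : ∀ k, d k = ∑ j, ‖(inner ℂ (h k) (vh j) : ℂ)‖ ^ 2)
    (αbar : Fin K → ℝ)
    (hroot : ∀ k, δ2 k / (αbar k * c k - σ2 k) +
      e k / (ζ k * (αbar k * d k + σ2 k)) = 1)
    (hlargest : ∀ k, ∀ α : ℝ,
      δ2 k / (α * c k - σ2 k) + e k / (ζ k * (α * d k + σ2 k)) = 1 → α ≤ αbar k)
    (αstar : ℝ) (hαstar : (∀ k, αbar k ≤ αstar) ∧ ∃ k, αbar k = αstar)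
    (ρt : Fin K → ℝ) (hρt : ∀ k, ρt k = δ2 k / (αstar * c k - σ2 k)) :
    1 < αstar ∧
    (∀ k, 0 < ρt k ∧ ρt k < 1) ∧
    (∀ k, γ k ≤ SINR h σ2 δ2 (scaled αstar vh) ρt k) ∧
    (∀ k, e k ≤ EH h σ2 ζ (scaled αstar vh) ρt k) ∧
    (∀ α : ℝ, 1 < α →
      (∃ ρ : Fin K → ℝ, (∀ k, 0 < ρ k ∧ ρ k < 1) ∧
        (∀ k, γ k ≤ SINR h σ2 δ2 (scaled α vh) ρ k) ∧
        (∀ k, e k ≤ EH h σ2 ζ (scaled α vh) ρ k)) →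
      αstar ≤ α) := by
  -- notation
  set S : Fin K → ℝ := fun k => ‖(inner ℂ (h k) (vh k) : ℂ)‖ ^ 2 with hSdef
  set Ik : Fin K → ℝ :=
    fun k => ∑ j ∈ univ.erase k, ‖(inner ℂ (h k) (vh j) : ℂ)‖ ^ 2 with hIdef
  have hIpos : ∀ k, 0 ≤ Ik k := fun k => Finset.sum_nonneg fun j _ => sq_nonneg _
  have hDpos : ∀ k, 0 < Ik k + σ2 k + δ2 k := by
    intro k; have := hσ k; have := hδ k; have := hIpos k; linarith
  have hS : ∀ k, S k = γ k * (Ik k + σ2 k + δ2 k) := by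
    intro k
    have := heq k
    rw [div_eq_iff (hDpos k).ne'] at this
    exact this
  have hSpos : ∀ k, 0 < S k := by
    intro k; rw [hS k]; exact mul_pos (hγ k) (hDpos k)
  have hck : ∀ k, c k = σ2 k + δ2 k := by
    intro k
    have h1 : ‖(inner ℂ (h k) (vh k) : ℂ)‖ ^ 2 = γ k * (Ik k + σ2 k + δ2 k) := hS k
    have h2 : (∑ j ∈ univ.erase k, ‖(inner ℂ (h k) (vh j) : ℂ)‖ ^ 2) = Ik k := rfl
    rw [hc k, h1, h2, mul_div_cancel_left₀ _ (hγ k).ne']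
    ring
  have hcpos : ∀ k, 0 < c k := by
    intro k; rw [hck k]; have := hσ k; have := hδ k; linarith
  have hdS : ∀ k, S k ≤ d k := by
    intro k
    rw [hd k]
    exact Finset.single_le_sum (f := fun j => ‖(inner ℂ (h k) (vh j) : ℂ)‖ ^ 2)
      (fun j _ => sq_nonneg _) (Finset.mem_univ k)
  have hdpos : ∀ k, 0 < d k := fun k => lt_of_lt_of_le (hSpos k) (hdS k)
  -- denominators for α ≥ 1
  have hden1 : ∀ k, ∀ α : ℝ, 1 ≤ α → δ2 k ≤ α * c k - σ2 k := by
    intro k α hα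
    rw [hck k]
    nlinarith [hσ k, hδ k]
  have hden1' : ∀ k, ∀ α : ℝ, 1 ≤ α → 0 < α * c k - σ2 k := by
    intro k α hα; exact lt_of_lt_of_le (hδ k) (hden1 k α hα)
  have hden2 : ∀ k, ∀ α : ℝ, 1 ≤ α → 0 < ζ k * (α * d k + σ2 k) := by
    intro k α hα
    have := hσ k; have := hdpos k
    exact mul_pos (hζ k).1 (by nlinarith)
  -- the scalar function
  set f : Fin K → ℝ → ℝ :=
    fun k α => δ2 k / (α * c k - σ2 k) + e k / (ζ k * (α * d k + σ2 k)) with hfdef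
  -- strict monotonicity of f on [1, ∞)
  have hmono : ∀ k, ∀ a b : ℝ, 1 ≤ a → a < b → f k b < f k a := by
    intro k a b ha hab
    have h1a := hden1' k a ha
    have h1b := hden1' k b (le_trans ha hab.le)
    have h2a := hden2 k a ha
    have h2b := hden2 k b (le_trans ha hab.le)
    have t1 : δ2 k / (b * c k - σ2 k) < δ2 k / (a * c k - σ2 k) := by
      apply div_lt_div_of_pos_left (hδ k) h1a
      nlinarith [hcpos k]
    have t2 : e k / (ζ k * (b * d k + σ2 k)) < e k / (ζ k * (a * d k + σ2 k)) := by
      apply div_lt_div_of_pos_left (he k) h2a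
      have := hdpos k
      have : a * d k + σ2 k < b * d k + σ2 k := by nlinarith
      exact mul_lt_mul_of_pos_left this (hζ k).1
    simpa [hfdef] using add_lt_add t1 t2
  have hmono' : ∀ k, ∀ a b : ℝ, 1 ≤ a → a ≤ b → f k b ≤ f k a := by
    intro k a b ha hab
    rcases eq_or_lt_of_le hab with rfl | hlt
    · exact le_refl _
    · exact (hmono k a b ha hlt).le
  -- f k 1 > 1
  have hf1 : ∀ k, 1 < f k 1 := by
    intro k
    have h1 : (1 : ℝ) * c k - σ2 k = δ2 k := by rw [hck k]; ring
    have h2 : 0 < e k / (ζ k * (1 * d k + σ2 k)) := div_pos (he k) (hden2 k 1 le_rfl)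
    have : δ2 k / ((1:ℝ) * c k - σ2 k) = 1 := by rw [h1, div_self (hδ k).ne']
    simp only [hfdef]
    rw [this]
    linarith
  -- each αbar k > 1, via IVT
  have hbar1 : ∀ k, 1 < αbar k := by
    intro k
    -- choose M large with f k M ≤ 1
    obtain ⟨M, hM1, hMle⟩ : ∃ M : ℝ, 1 ≤ M ∧ f k M ≤ 1 := by
      refine ⟨max ((σ2 k + 2 * δ2 k) / c k) (2 * e k / (ζ k * d k)) + 1, ?_, ?_⟩
      · have h1 : 0 < (σ2 k + 2 * δ2 k) / c k :=
          div_pos (by have := hσ k; have := hδ k; linarith) (hcpos k)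
        have := le_max_left ((σ2 k + 2 * δ2 k) / c k) (2 * e k / (ζ k * d k))
        linarith
      · set M := max ((σ2 k + 2 * δ2 k) / c k) (2 * e k / (ζ k * d k)) + 1 with hM
        have hM1 : (1:ℝ) ≤ M := by
          have h1 : 0 < (σ2 k + 2 * δ2 k) / c k :=
            div_pos (by have := hσ k; have := hδ k; linarith) (hcpos k)
          have := le_max_left ((σ2 k + 2 * δ2 k) / c k) (2 * e k / (ζ k * d k))
          simp only [hM]; linarith
        have hMc : (σ2 k + 2 * δ2 k) / c k ≤ M := by
          have := le_max_left ((σ2 k + 2 * δ2 k) / c k) (2 * e k / (ζ k * d k))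
          simp only [hM]; linarith
        have hMd : 2 * e k / (ζ k * d k) ≤ M := by
          have := le_max_right ((σ2 k + 2 * δ2 k) / c k) (2 * e k / (ζ k * d k))
          simp only [hM]; linarith
        have hc1 : σ2 k + 2 * δ2 k ≤ M * c k := by
          rw [div_le_iff₀ (hcpos k)] at hMc; linarith
        have hd1 : 2 * e k ≤ ζ k * (M * d k) := by
          rw [div_le_iff₀ (mul_pos (hζ k).1 (hdpos k))] at hMd
          nlinarith
        have t1 : δ2 k / (M * c k - σ2 k) ≤ 1 / 2 := by
          rw [div_le_div_iff₀ (hden1' k M hM1) (by norm_num)]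
          linarith
        have t2 : e k / (ζ k * (M * d k + σ2 k)) ≤ 1 / 2 := by
          rw [div_le_div_iff₀ (hden2 k M hM1) (by norm_num)]
          have : 0 < ζ k * σ2 k := mul_pos (hζ k).1 (hσ k)
          nlinarith
        simp only [hfdef]
        linarith
    -- continuity
    have hcont : ContinuousOn (f k) (Set.Icc 1 M) := by
      apply ContinuousOn.add
      · exact ContinuousOn.div continuousOn_const
          (Continuous.continuousOn
            ((continuous_id.mul continuous_const).sub continuous_const))
          (fun x hx => (hden1' k x hx.1).ne')
      · exact ContinuousOn.div continuousOn_const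
          (Continuous.continuousOn
            (continuous_const.mul ((continuous_id.mul continuous_const).add continuous_const)))
          (fun x hx => (hden2 k x hx.1).ne')
    have hsub := intermediate_value_Icc' hM1 hcont
    have h1mem : (1:ℝ) ∈ Set.Icc (f k M) (f k 1) := ⟨hMle, (hf1 k).le⟩
    obtain ⟨α₀, hα₀mem, hα₀⟩ := hsub h1mem
    have hα₀le : α₀ ≤ αbar k := hlargest k α₀ hα₀
    have : α₀ ≠ 1 := by
      intro h'
      rw [h'] at hα₀
      exact absurd hα₀ (hf1 k).ne'
    have : 1 < α₀ := lt_of_le_of_ne hα₀mem.1 (Ne.symm this)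
    linarith
  obtain ⟨hub, k0, hk0⟩ := hαstar
  have hαs1 : 1 < αstar := lt_of_lt_of_le (hbar1 k0) (hk0 ▸ hub k0)
  -- ρt bounds
  have hXpos : ∀ k, 0 < αstar * c k - σ2 k := fun k => hden1' k αstar hαs1.le
  have hρpos : ∀ k, 0 < ρt k := by
    intro k; rw [hρt k]; exact div_pos (hδ k) (hXpos k)
  have hρlt : ∀ k, ρt k < 1 := by
    intro k
    rw [hρt k, div_lt_one (hXpos k), hck k]
    nlinarith [hσ k, hδ k]
  have hρX : ∀ k, ρt k * (αstar * c k - σ2 k) = δ2 k := by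
    intro k; rw [hρt k, div_mul_cancel₀ _ (hXpos k).ne']
  -- f k αstar ≤ 1
  have hfαs : ∀ k, f k αstar ≤ 1 := by
    intro k
    calc f k αstar ≤ f k (αbar k) := hmono' k (αbar k) αstar (hbar1 k).le (hub k)
    _ = 1 := hroot k
  -- rewriting SINR and EH with scaled vectors
  have hSINRrw : ∀ (α : ℝ), 0 ≤ α → ∀ (ρ : Fin K → ℝ) (k : Fin K),
      SINR h σ2 δ2 (scaled α vh) ρ k =
        ρ k * (α * S k) / (ρ k * (α * Ik k) + ρ k * σ2 k + δ2 k) := by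
    intro α hα ρ k
    have hsum : ∑ j ∈ univ.erase k, ‖(inner ℂ (h k) (scaled α vh j) : ℂ)‖ ^ 2 = α * Ik k := by
      rw [hIdef, Finset.mul_sum]
      exact Finset.sum_congr rfl fun j _ => norm_inner_scaled α hα (h k) vh j
    rw [SINR, hsum, norm_inner_scaled α hα (h k) vh k]
  have hEHrw : ∀ (α : ℝ), 0 ≤ α → ∀ (ρ : Fin K → ℝ) (k : Fin K),
      EH h σ2 ζ (scaled α vh) ρ k = ζ k * (1 - ρ k) * (α * d k + σ2 k) := by
    intro α hα ρ k
    have hsum : ∑ j, ‖(inner ℂ (h k) (scaled α vh j) : ℂ)‖ ^ 2 = α * d k := by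
      rw [hd k, Finset.mul_sum]
      exact Finset.sum_congr rfl fun j _ => norm_inner_scaled α hα (h k) vh j
    rw [EH, hsum]
  refine ⟨hαs1, fun k => ⟨hρpos k, hρlt k⟩, ?_, ?_, ?_⟩
  · -- SINR at the optimum
    intro k
    rw [hSINRrw αstar (by linarith) ρt k]
    have hden : 0 < ρt k * (αstar * Ik k) + ρt k * σ2 k + δ2 k := by
      have h1 : 0 ≤ ρt k * (αstar * Ik k) :=
        mul_nonneg (hρpos k).le (mul_nonneg (by linarith) (hIpos k))
      have h2 : 0 < ρt k * σ2 k := mul_pos (hρpos k) (hσ k)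
      have := hδ k; linarith
    rw [le_div_iff₀ hden]
    have h1 := hρX k
    have h2 := hS k
    have h3 := hck k
    have key : ρt k * (αstar * S k) =
        γ k * (ρt k * (αstar * Ik k) + ρt k * σ2 k + δ2 k) := by
      rw [h2]
      rw [h3] at h1
      linear_combination γ k * h1
    exact le_of_eq key.symm
  · -- EH at the optimum
    intro k
    rw [hEHrw αstar (by linarith) ρt k]
    have hf := hfαs k
    simp only [hfdef] at hf
    rw [← hρt k] at hf
    have h2 := hden2 k αstar hαs1.le
    have : e k / (ζ k * (αstar * d k + σ2 k)) ≤ 1 - ρt k := by linarith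
    rw [div_le_iff₀ h2] at this
    calc e k ≤ (1 - ρt k) * (ζ k * (αstar * d k + σ2 k)) := this
    _ = ζ k * (1 - ρt k) * (αstar * d k + σ2 k) := by ring
  · -- optimality
    intro α hα ⟨ρ, hρ, hSINR, hEH⟩
    rw [← hk0]
    by_contra hcon
    push_neg at hcon
    -- feasibility gives f k0 α ≤ 1
    have hfle : f k0 α ≤ 1 := by
      have hX := hden1' k0 α hα.le
      have hρk := hρ k0
      -- from SINR
      have h1 := hSINR k0
      rw [hSINRrw α (by linarith) ρ k0] at h1
      have hden : 0 < ρ k0 * (α * Ik k0) + ρ k0 * σ2 k0 + δ2 k0 := by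
        have ha : 0 ≤ ρ k0 * (α * Ik k0) :=
          mul_nonneg hρk.1.le (mul_nonneg (by linarith) (hIpos k0))
        have hb : 0 < ρ k0 * σ2 k0 := mul_pos hρk.1 (hσ k0)
        have := hδ k0; linarith
      rw [le_div_iff₀ hden] at h1
      have hkey : δ2 k0 ≤ ρ k0 * (α * c k0 - σ2 k0) := by
        have h2 := hS k0
        have h3 := hck k0
        have hA : γ k0 * (ρ k0 * (α * Ik k0) + ρ k0 * σ2 k0 + δ2 k0) ≤
            γ k0 * (ρ k0 * (α * Ik k0) + ρ k0 * (α * c k0)) := by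
          calc γ k0 * (ρ k0 * (α * Ik k0) + ρ k0 * σ2 k0 + δ2 k0) ≤ ρ k0 * (α * S k0) := h1
          _ = γ k0 * (ρ k0 * (α * Ik k0) + ρ k0 * (α * c k0)) := by rw [h2, h3]; ring
        have hB := le_of_mul_le_mul_left hA (hγ k0)
        nlinarith [hB]
      have t1 : δ2 k0 / (α * c k0 - σ2 k0) ≤ ρ k0 := by
        rw [div_le_iff₀ hX]; linarith
      -- from EH
      have h4 := hEH k0
      rw [hEHrw α (by linarith) ρ k0] at h4
      have h5 := hden2 k0 α hα.le
      have t2 : e k0 / (ζ k0 * (α * d k0 + σ2 k0)) ≤ 1 - ρ k0 := by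
        rw [div_le_iff₀ h5]; nlinarith
      simp only [hfdef]
      linarith
    have h9 : f k0 (αbar k0) = 1 := hroot k0
    have := hmono k0 α (αbar k0) hα.le hcon
    linarith
end
end

section
/- If K ≤ N_t and h_1,…,h_K ∈ ℂ^{N_t} are linearly independent, then the ZF problem is feasible: there exist v_1,…,v_K ∈ ℂ^{N_t} and ρ_1,…,ρ_K ∈ (0,1) with ρ_k|h_k^H v_k|²/(ρ_k σ_k² + δ_k²) ≥ γ_k, ζ_k(1−ρ_k)(|h_k^H v_k|² + σ_k²) ≥ e_k, and h_j^H v_k = 0 for all j ≠ k. -/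
set_option maxHeartbeats 1000000

noncomputable section

theorem zf_problem_feasible_of_linearIndependent (K Nt : ℕ) (hKNt : K ≤ Nt)
    (h : Fin K → EuclideanSpace ℂ (Fin Nt)) (hli : LinearIndependent ℂ h)
    (σ2 δ2 ζ γ e : Fin K → ℝ)
    (hσ : ∀ k, 0 < σ2 k) (hδ : ∀ k, 0 < δ2 k)
    (hζ : ∀ k, 0 < ζ k ∧ ζ k ≤ 1) (hγ : ∀ k, 0 < γ k) (he : ∀ k, 0 < e k) :
    ∃ (v : Fin K → EuclideanSpace ℂ (Fin Nt)) (ρ : Fin K → ℝ),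
      (∀ k, 0 < ρ k ∧ ρ k < 1) ∧
      (∀ k, γ k ≤ ρ k * ‖(inner ℂ (h k) (v k) : ℂ)‖ ^ 2 / (ρ k * σ2 k + δ2 k)) ∧
      (∀ k, e k ≤ ζ k * (1 - ρ k) * (‖(inner ℂ (h k) (v k) : ℂ)‖ ^ 2 + σ2 k)) ∧
      (∀ k, ∀ j, j ≠ k → (inner ℂ (h j) (v k) : ℂ) = 0) := by
  -- target power
  set M : Fin K → ℝ := fun k => max (γ k * (σ2 k + 2 * δ2 k)) (2 * e k / ζ k) with hM
  have hMpos : ∀ k, 0 < M k := fun k =>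
    lt_max_of_lt_left (mul_pos (hγ k) (by nlinarith [hσ k, hδ k]))
  -- span of the other channels
  set S : Fin K → Submodule ℂ (EuclideanSpace ℂ (Fin Nt)) :=
    fun k => Submodule.span ℂ (h '' {j | j ≠ k}) with hS
  set u : Fin K → EuclideanSpace ℂ (Fin Nt) :=
    fun k => h k - (Submodule.orthogonalProjectionOnto (S k) (h k) : EuclideanSpace ℂ (Fin Nt)) with hu
  have hu_orth : ∀ k, u k ∈ (S k)ᗮ := fun k =>
    Submodule.sub_starProjection_mem_orthogonal (K := S k) (h k)
  have hu_ne : ∀ k, u k ≠ 0 := by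
    intro k hk
    have hmem : h k ∈ S k := by
      have h0 : h k = (Submodule.orthogonalProjectionOnto (S k) (h k) : EuclideanSpace ℂ (Fin Nt)) :=
        sub_eq_zero.mp hk
      rw [h0]; exact (Submodule.orthogonalProjectionOnto (S k) (h k)).2
    rw [hS] at hmem
    exact hli.notMem_span_image (s := {j | j ≠ k}) (fun hh => hh rfl) hmem
  have hnu : ∀ k, (0:ℝ) < ‖u k‖ := fun k => norm_pos_iff.mpr (hu_ne k)
  -- inner products
  have hinner_self : ∀ k, (inner ℂ (h k) (u k) : ℂ) = ((‖u k‖ : ℂ)) ^ 2 := by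
    intro k
    have hp : (inner ℂ ((Submodule.orthogonalProjectionOnto (S k) (h k) : EuclideanSpace ℂ (Fin Nt))) (u k) : ℂ) = 0 :=
      (Submodule.mem_orthogonal _ _).mp (hu_orth k) _
        (Submodule.orthogonalProjectionOnto (S k) (h k)).2
    have h1 : (inner ℂ (h k) (u k) : ℂ)
        = inner ℂ (u k) (u k) + inner ℂ ((Submodule.orthogonalProjectionOnto (S k) (h k) : EuclideanSpace ℂ (Fin Nt))) (u k) := by
      rw [← inner_add_left]
      congr 1
      simp [hu]
    rw [h1, hp, add_zero, inner_self_eq_norm_sq_to_K]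
    norm_cast
  have hinner_zero : ∀ k j, j ≠ k → (inner ℂ (h j) (u k) : ℂ) = 0 := by
    intro k j hjk
    have hm : h j ∈ S k := by rw [hS]; exact Submodule.subset_span ⟨j, hjk, rfl⟩
    exact (Submodule.mem_orthogonal _ _).mp (hu_orth k) _ hm
  -- beamformers
  set c : Fin K → ℝ := fun k => Real.sqrt (M k) / ‖u k‖ ^ 2 with hc
  have hcnn : ∀ k, 0 ≤ c k := fun k =>
    div_nonneg (Real.sqrt_nonneg _) (sq_nonneg _)
  have key : ∀ k, ‖(inner ℂ (h k) (((c k : ℂ)) • u k) : ℂ)‖ ^ 2 = M k := by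
    intro k
    rw [inner_smul_right, hinner_self]
    have h1 : ‖(c k : ℂ) * (‖u k‖ : ℂ) ^ 2‖ = c k * ‖u k‖ ^ 2 := by
      rw [norm_mul, norm_pow, Complex.norm_real, Complex.norm_real,
        Real.norm_of_nonneg (hcnn k), Real.norm_of_nonneg (norm_nonneg _)]
    rw [h1]
    have hun : (0:ℝ) < ‖u k‖ ^ 2 := pow_pos (hnu k) 2
    rw [hc]
    field_simp
    rw [mul_div_cancel_right₀ _ (hnu k).ne']
    exact Real.sq_sqrt (hMpos k).le
  refine ⟨fun k => ((c k : ℂ)) • u k, fun _ => 1/2, ?_, ?_, ?_, ?_⟩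
  · intro k; norm_num
  · intro k
    beta_reduce
    rw [key k]
    have hd : (0:ℝ) < 1/2 * σ2 k + δ2 k := by nlinarith [hσ k, hδ k]
    rw [le_div_iff₀ hd]
    have : γ k * (σ2 k + 2 * δ2 k) ≤ M k := le_max_left _ _
    nlinarith
  · intro k
    beta_reduce
    rw [key k]
    have h2 : 2 * e k / ζ k ≤ M k := le_max_right _ _
    have hz := hζ k
    have h3 : 2 * e k ≤ ζ k * M k := by
      rw [div_le_iff₀ hz.1] at h2; nlinarith
    nlinarith [hσ k, mul_nonneg hz.1.le (hσ k).le]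
  · intro k j hjk
    beta_reduce
    rw [inner_smul_right, hinner_zero k j hjk, mul_zero]
end
end

section
/- Let h_1,…,h_K ∈ ℂ^N, let c_1,…,c_K be real numbers, and set B = I_N + Σ_{j=1}^K c_j h_j h_j^H. Suppose B is positive semidefinite and for every k there exists t_k > 0 such that B − t_k h_k h_k^H is positive semidefinite. Then B is positive definite. -/
noncomputable section

open Matrix
open scoped ComplexOrder

private lemma vecMulVec_mulVec' {N : ℕ} (u v x : Fin N → ℂ) :
    vecMulVec u v *ᵥ x = (v ⬝ᵥ x) • u := by
  ext i
  simp [vecMulVec_apply, mulVec, dotProduct, Finset.mul_sum, mul_comm, mul_assoc, mul_left_comm]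

private lemma quad_vecMulVec {N : ℕ} (u x : Fin N → ℂ) :
    star x ⬝ᵥ (vecMulVec u (star u) *ᵥ x) =
      (Complex.normSq (star u ⬝ᵥ x) : ℂ) := by
  rw [vecMulVec_mulVec', dotProduct_smul]
  have hconj : star x ⬝ᵥ u = starRingEnd ℂ (star u ⬝ᵥ x) := by
    simp [dotProduct, map_sum, mul_comm]
  rw [hconj, smul_eq_mul, Complex.mul_conj]

theorem posDef_of_rank_one_perturbations (N K : ℕ)
    (h : Fin K → (Fin N → ℂ)) (c : Fin K → ℝ)
    (B : Matrix (Fin N) (Fin N) ℂ)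
    (hB : B = 1 + ∑ j, (c j : ℂ) • vecMulVec (h j) (star (h j)))
    (hBpsd : B.PosSemidef)
    (hpert : ∀ k, ∃ t : ℝ, 0 < t ∧
      (B - (t : ℂ) • vecMulVec (h k) (star (h k))).PosSemidef) :
    B.PosDef := by
  refine posDef_iff_dotProduct_mulVec.mpr ⟨hBpsd.1, fun x hx => ?_⟩
  have hq0 : 0 ≤ star x ⬝ᵥ (B *ᵥ x) := hBpsd.dotProduct_mulVec_nonneg x
  refine lt_of_le_of_ne hq0 fun hq => ?_
  -- all a_k = 0
  have ha : ∀ k, star (h k) ⬝ᵥ x = 0 := by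
    intro k
    obtain ⟨t, ht, hpsd⟩ := hpert k
    have := hpsd.dotProduct_mulVec_nonneg x
    rw [sub_mulVec, dotProduct_sub, ← hq, smul_mulVec, dotProduct_smul,
      quad_vecMulVec] at this
    have h1 : (t : ℂ) * (Complex.normSq (star (h k) ⬝ᵥ x) : ℂ) ≤ 0 := by
      simpa using neg_nonneg.mp (le_of_le_of_eq this (by ring_nf))
    have h2 : (0:ℂ) ≤ (t : ℂ) * (Complex.normSq (star (h k) ⬝ᵥ x) : ℂ) := by
      apply mul_nonneg
      · exact_mod_cast le_of_lt ht
      · exact_mod_cast Complex.normSq_nonneg _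
    have h3 : (t : ℂ) * (Complex.normSq (star (h k) ⬝ᵥ x) : ℂ) = 0 := le_antisymm h1 h2
    have ht0 : (t : ℂ) ≠ 0 := by exact_mod_cast ne_of_gt ht
    have := (mul_eq_zero.mp h3).resolve_left ht0
    have : Complex.normSq (star (h k) ⬝ᵥ x) = 0 := by exact_mod_cast this
    exact Complex.normSq_eq_zero.mp this
  -- now q = ‖x‖² > 0
  have : star x ⬝ᵥ (B *ᵥ x) = star x ⬝ᵥ x := by
    rw [hB, add_mulVec, dotProduct_add, one_mulVec]
    have : star x ⬝ᵥ ((∑ j, (c j : ℂ) • vecMulVec (h j) (star (h j))) *ᵥ x) = 0 := by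
      have hsum : (∑ j, (c j : ℂ) • vecMulVec (h j) (star (h j))) *ᵥ x
          = ∑ j, ((c j : ℂ) • vecMulVec (h j) (star (h j))) *ᵥ x := by
        ext i
        simp only [mulVec, dotProduct, Finset.sum_apply, Matrix.sum_apply,
          Finset.sum_mul, Matrix.smul_apply, smul_eq_mul]
        rw [Finset.sum_comm]
      have hds : star x ⬝ᵥ ∑ j, ((c j : ℂ) • vecMulVec (h j) (star (h j))) *ᵥ x
          = ∑ j, star x ⬝ᵥ ((c j : ℂ) • vecMulVec (h j) (star (h j))) *ᵥ x := by
        simp only [dotProduct, Finset.sum_apply, Finset.mul_sum]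
        rw [Finset.sum_comm]
      rw [hsum, hds]
      refine Finset.sum_eq_zero fun j _ => ?_
      rw [smul_mulVec, dotProduct_smul, quad_vecMulVec, ha j]
      simp
    rw [this, add_zero]
  rw [← hq] at this
  exact hx (dotProduct_star_self_eq_zero.mp this.symm)
end
end
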